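/- arXiv:1605.02891 — 3 statements merged into one kernel-verified Lean document; each statement's English description precedes it below -/
import Mathlib

section
/- The class of (weak) bar 1-visibility graphs is closed under path-addition: if a finite simple graph G admits a bar 1-visibility representation, u and v are distinct vertices of G, and P is a path of length at least |V(G)|−1 from u to v whose internal vertices are new, then G ⊕ P ⊕ ∅ admits a bar 1-visibility representation. -/
/-- Points of the plane `ℝ²`. -/
abbrev Plane : Type := ℝ × ℝ

/-- The `i`-th vertex of a path from `a` to `b` whose internal vertices are
`w 0, …, w (t-1)` (so the path has length `t + 1`). -/
def chainVertex {α : Type*} (a b : α) {t : ℕ} (w : Fin t → α) (i : Fin (t + 2)) : α :=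
  if _h0 : (i : ℕ) = 0 then a
  else if _h1 : (i : ℕ) = t + 1 then b
  else w ⟨(i : ℕ) - 1, by have := i.isLt; omega⟩

/-- The edge set of a path from `a` to `b` through the internal vertices
`w 0, …, w (t-1)`. -/
def chainEdges {α : Type*} (a b : α) {t : ℕ} (w : Fin t → α) : Set (Sym2 α) :=
  {e | ∃ i : Fin (t + 1),
    e = s(chainVertex a b w (Fin.castSucc i), chainVertex a b w (Fin.succ i))}

/-- Path-addition `G ⊕ P ⊕ F`: the graph on `V ⊕ Fin t` obtained from `G` by adding an
internally vertex-disjoint path `P = (u, w₁, …, w_t, v)` with `t` new internal vertices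
together with a set `F` of supplementary edges. -/
def pathAdd {V : Type*} (G : SimpleGraph V) (u v : V) (t : ℕ)
    (F : Set (Sym2 (V ⊕ Fin t))) : SimpleGraph (V ⊕ Fin t) :=
  SimpleGraph.fromEdgeSet
    ((Sym2.map Sum.inl '' G.edgeSet)
      ∪ chainEdges (Sum.inl u) (Sum.inl v) (fun i => Sum.inr i)
      ∪ F)

/-- A valid supplementary edge set: every supplementary edge is a non-loop with at least
one endpoint among the internal vertices `w₁, …, w_t` of the added path. -/
def ValidSupp {V : Type*} {t : ℕ} (F : Set (Sym2 (V ⊕ Fin t))) : Prop :=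
  ∀ e ∈ F, ¬ e.IsDiag ∧ ∃ i : Fin t, Sum.inr i ∈ e

/-- The horizontal bar with x-range `[lo, hi]` at height `y`. -/
def hBar (lo hi y : ℝ) : Set Plane := Set.Icc lo hi ×ˢ ({y} : Set ℝ)

/-- A (weak) bar 1-visibility representation of `G`: each vertex gets a horizontal closed
bar, the bars being pairwise disjoint, and each edge `xy` a vertical line of sight with
one endpoint on the bar of `x` and the other on the bar of `y` whose interior intersects
the bars of at most one vertex other than `x` and `y`. -/
structure Bar1VisRep {V : Type*} (G : SimpleGraph V) where
  lo : V → ℝ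
  hi : V → ℝ
  yc : V → ℝ
  lo_le_hi : ∀ x : V, lo x ≤ hi x
  bars_disjoint : ∀ x y : V, x ≠ y →
    Disjoint (hBar (lo x) (hi x) (yc x)) (hBar (lo y) (hi y) (yc y))
  /-- the x-coordinate of the vertical line of sight chosen for each edge -/
  sight : Sym2 V → ℝ
  sight_on_bars : ∀ x y : V, G.Adj x y →
    sight s(x, y) ∈ Set.Icc (lo x) (hi x) ∧ sight s(x, y) ∈ Set.Icc (lo y) (hi y)
  sight_one_bar : ∀ x y : V, G.Adj x y →
    {z : V | z ≠ x ∧ z ≠ y ∧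
      ((({sight s(x, y)} : Set ℝ) ×ˢ Set.Ioo (min (yc x) (yc y)) (max (yc x) (yc y))) ∩
        hBar (lo z) (hi z) (yc z)).Nonempty}.Subsingleton

/-- A graph is a (weak) bar 1-visibility graph if it admits a bar 1-visibility
representation. -/
def IsBar1VisibilityGraph {V : Type*} (G : SimpleGraph V) : Prop :=
  Nonempty (Bar1VisRep G)


lemma mem_hBar {lo hi y : ℝ} {p : ℝ × ℝ} :
    p ∈ hBar lo hi y ↔ p.1 ∈ Set.Icc lo hi ∧ p.2 = y :=
  ⟨fun h => ⟨h.1, h.2⟩, fun h => ⟨h.1, h.2⟩⟩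

/-- Existence of a descending "ladder" of heights starting at `α`, staying above `β`,
passing at most one element of `B` per step, and having passed at least `i` elements
after `i` steps. -/
lemma ladder (B : Finset ℝ) (α β : ℝ) (hβα : β < α) (hB : ∀ b ∈ B, b ∈ Set.Ioo β α) :
    ∃ H : ℕ → ℝ, H 0 = α ∧ (∀ i, H (i + 1) < H i) ∧ (∀ i, β < H i) ∧
      (∀ i, ∀ b ∈ B, ∀ b' ∈ B, b ∈ Set.Ioo (H (i+1)) (H i) → b' ∈ Set.Ioo (H (i+1)) (H i) → b = b') ∧
      (∀ i, (B.filter (fun c => c < H i)).card ≤ B.card - i) ∧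
      (∀ i, H (i + 1) ∉ (B : Set ℝ)) := by
  classical
  set next : ℝ → ℝ := fun x =>
    if h : (B.filter (fun c => c < x)).Nonempty then
      ((B.filter (fun c => c < x)).max' h +
        (insert β (B.filter (fun c => c < (B.filter (fun c => c < x)).max' h))).max'
          (Finset.insert_nonempty _ _)) / 2
    else (β + x) / 2 with hnext
  have step : ∀ x, β < x →
      next x < x ∧ β < next x ∧ next x ∉ (B : Set ℝ) ∧
      (∀ b ∈ B, ∀ b' ∈ B, b ∈ Set.Ioo (next x) x → b' ∈ Set.Ioo (next x) x → b = b') ∧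
      ((B.filter (fun c => c < next x)).card + 1 ≤ (B.filter (fun c => c < x)).card ∨
        (B.filter (fun c => c < next x)) = ∅) := by
    intro x hx
    by_cases h : (B.filter (fun c => c < x)).Nonempty
    · have hnx : next x = ((B.filter (fun c => c < x)).max' h +
        (insert β (B.filter (fun c => c < (B.filter (fun c => c < x)).max' h))).max'
          (Finset.insert_nonempty _ _)) / 2 := by
        rw [hnext]; simp only [dif_pos h]
      set M : ℝ := (B.filter (fun c => c < x)).max' h with hM
      set L : ℝ := (insert β (B.filter (fun c => c < M))).max' (Finset.insert_nonempty _ _) with hL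
      have hMmem : M ∈ B.filter (fun c => c < x) := Finset.max'_mem _ h
      have hMB : M ∈ B := (Finset.mem_filter.1 hMmem).1
      have hMx : M < x := (Finset.mem_filter.1 hMmem).2
      have hLmem : L ∈ insert β (B.filter (fun c => c < M)) :=
        Finset.max'_mem _ (Finset.insert_nonempty _ _)
      have hLM : L < M := by
        rcases Finset.mem_insert.1 hLmem with h1 | h1
        · rw [h1]; exact (hB M hMB).1
        · exact (Finset.mem_filter.1 h1).2
      have hβL : β ≤ L := Finset.le_max' _ β (Finset.mem_insert_self _ _)
      have h1 : next x < M := by rw [hnx]; linarith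
      have h2 : L < next x := by rw [hnx]; linarith
      have hub : ∀ b ∈ B, b < M → b ≤ L := fun b hb hbM =>
        Finset.le_max' (insert β (B.filter (fun c => c < M))) b
          (Finset.mem_insert_of_mem (Finset.mem_filter.2 ⟨hb, hbM⟩))
      have key : ∀ b ∈ B, b ∈ Set.Ioo (next x) x → b = M := by
        intro b hb hbI
        have hble : b ≤ M := Finset.le_max' (B.filter (fun c => c < x)) b
          (Finset.mem_filter.2 ⟨hb, hbI.2⟩)
        rcases lt_or_eq_of_le hble with hlt | heq
        · exact absurd (lt_of_le_of_lt (hub b hb hlt) h2) (not_lt.2 (le_of_lt hbI.1))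
        · exact heq
      refine ⟨lt_trans h1 hMx, lt_of_le_of_lt hβL h2, ?_, ?_, ?_⟩
      · intro hmem
        exact absurd h2 (not_lt.2 (hub _ hmem h1))
      · intro b hb b' hb' hbI hbI'
        rw [key b hb hbI, key b' hb' hbI']
      · left
        have hsub : B.filter (fun c => c < next x) ⊆ (B.filter (fun c => c < x)).erase M := by
          intro b hbmem
          rw [Finset.mem_filter] at hbmem
          refine Finset.mem_erase.2 ⟨?_, Finset.mem_filter.2
            ⟨hbmem.1, lt_trans hbmem.2 (lt_trans h1 hMx)⟩⟩
          intro hbM; rw [hbM] at hbmem; exact absurd hbmem.2 (not_lt.2 (le_of_lt h1))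
        calc (B.filter (fun c => c < next x)).card + 1
            ≤ ((B.filter (fun c => c < x)).erase M).card + 1 :=
              Nat.add_le_add_right (Finset.card_le_card hsub) 1
          _ = (B.filter (fun c => c < x)).card := by
              rw [Finset.card_erase_of_mem hMmem]
              exact Nat.succ_pred_eq_of_pos (Finset.card_pos.2 ⟨M, hMmem⟩)
    · have hnx : next x = (β + x) / 2 := by rw [hnext]; simp only [dif_neg h]
      have h1 : next x < x := by rw [hnx]; linarith
      have h2 : β < next x := by rw [hnx]; linarith
      have hemp : B.filter (fun c => c < x) = ∅ := Finset.not_nonempty_iff_eq_empty.1 h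
      have hno : ∀ b ∈ B, ¬ b < x := by
        intro b hb hblt
        have : b ∈ B.filter (fun c => c < x) := Finset.mem_filter.2 ⟨hb, hblt⟩
        rw [hemp] at this; exact absurd this (Finset.notMem_empty _)
      refine ⟨h1, h2, ?_, ?_, Or.inr ?_⟩
      · intro hmem
        exact hno _ hmem h1
      · intro b hb b' hb' hbI hbI'
        exact absurd hbI.2 (hno b hb)
      · exact Finset.filter_eq_empty_iff.2 fun {b} hb hblt => hno b hb (lt_trans hblt h1)
  refine ⟨fun i => next^[i] α, rfl, ?_, ?_, ?_, ?_, ?_⟩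
  all_goals
    have hpos : ∀ i, β < next^[i] α := by
      intro i
      induction i with
      | zero => exact hβα
      | succ n ih =>
          rw [Function.iterate_succ_apply']
          exact (step _ ih).2.1
  · intro i
    show next^[i+1] α < next^[i] α
    rw [Function.iterate_succ_apply']
    exact (step _ (hpos i)).1
  · exact hpos
  · intro i
    show ∀ b ∈ B, ∀ b' ∈ B, b ∈ Set.Ioo (next^[i+1] α) (next^[i] α) →
      b' ∈ Set.Ioo (next^[i+1] α) (next^[i] α) → b = b'
    rw [Function.iterate_succ_apply']
    exact (step _ (hpos i)).2.2.2.1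
  · intro i
    induction i with
    | zero => simpa using Finset.card_filter_le B _
    | succ n ih =>
        show (B.filter (fun c => c < next^[n+1] α)).card ≤ B.card - (n+1)
        simp only at ih
        rcases (step _ (hpos n)).2.2.2.2 with hle | hemp
        · rw [Function.iterate_succ_apply']
          omega
        · rw [Function.iterate_succ_apply', hemp]
          simp
  · intro i
    show next^[i+1] α ∉ (B : Set ℝ)
    rw [Function.iterate_succ_apply']
    exact (step _ (hpos i)).2.2.1

lemma hBar_disjoint_iff {lo hi y lo' hi' y' : ℝ} :
    Disjoint (hBar lo hi y) (hBar lo' hi' y') ↔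
      ∀ x : ℝ, x ∈ Set.Icc lo hi → x ∈ Set.Icc lo' hi' → y ≠ y' := by
  constructor
  · intro hd x h1 h2 hy
    have m1 : ((x, y) : ℝ × ℝ) ∈ hBar lo hi y := mem_hBar.2 ⟨h1, rfl⟩
    have m2 : ((x, y) : ℝ × ℝ) ∈ hBar lo' hi' y' := mem_hBar.2 ⟨h2, hy⟩
    exact Set.disjoint_left.1 hd m1 m2
  · intro h
    rw [Set.disjoint_left]
    rintro p hp hq
    rw [mem_hBar] at hp hq
    exact h p.1 hp.1 hq.1 (hp.2 ▸ hq.2)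

lemma hBar_disjoint_of_ne {lo hi y lo' hi' y' : ℝ} (h : y ≠ y') :
    Disjoint (hBar lo hi y) (hBar lo' hi' y') := by
  rw [hBar_disjoint_iff]
  exact fun x _ _ => h

lemma hBar_disjoint_of_x {lo hi y lo' hi' y' : ℝ}
    (h : ∀ x : ℝ, x ∈ Set.Icc lo hi → x ∉ Set.Icc lo' hi') :
    Disjoint (hBar lo hi y) (hBar lo' hi' y') := by
  rw [hBar_disjoint_iff]
  exact fun x h1 h2 => absurd h2 (h x h1)

lemma seg_inter_nonempty {s y1 y2 lo hi yz : ℝ} :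
    ((({s} : Set ℝ) ×ˢ Set.Ioo y1 y2) ∩ hBar lo hi yz).Nonempty ↔
      s ∈ Set.Icc lo hi ∧ yz ∈ Set.Ioo y1 y2 := by
  constructor
  · rintro ⟨p, hp1, hp2⟩
    rw [mem_hBar] at hp2
    have h1 : p.1 = s := hp1.1
    have h2 : p.2 ∈ Set.Ioo y1 y2 := hp1.2
    exact ⟨h1 ▸ hp2.1, hp2.2 ▸ h2⟩
  · rintro ⟨h1, h2⟩
    exact ⟨(s, yz), ⟨rfl, h2⟩, mem_hBar.2 ⟨h1, rfl⟩⟩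

section
variable {V : Type*} {G : SimpleGraph V}

/-- two bars sharing a column and a height are the same bar -/
lemma Bar1VisRep.col_inj (R : Bar1VisRep G) {z1 z2 : V} {s : ℝ}
    (h1 : s ∈ Set.Icc (R.lo z1) (R.hi z1)) (h2 : s ∈ Set.Icc (R.lo z2) (R.hi z2))
    (hy : R.yc z1 = R.yc z2) : z1 = z2 := by
  by_contra hne
  exact hBar_disjoint_iff.1 (R.bars_disjoint z1 z2 hne) s h1 h2 hy

/-- flip a representation upside down -/
def Bar1VisRep.flip (R : Bar1VisRep G) : Bar1VisRep G where
  lo := R.lo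
  hi := R.hi
  yc := fun z => -R.yc z
  lo_le_hi := R.lo_le_hi
  bars_disjoint := by
    intro x y hxy
    rw [hBar_disjoint_iff]
    intro s h1 h2 hy
    exact hBar_disjoint_iff.1 (R.bars_disjoint x y hxy) s h1 h2 (neg_inj.1 hy)
  sight := R.sight
  sight_on_bars := R.sight_on_bars
  sight_one_bar := by
    intro x y hadj
    have hset : ∀ z : V,
        ((({R.sight s(x, y)} : Set ℝ) ×ˢ
          Set.Ioo (min (-R.yc x) (-R.yc y)) (max (-R.yc x) (-R.yc y))) ∩
          hBar (R.lo z) (R.hi z) (-R.yc z)).Nonempty ↔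
        ((({R.sight s(x, y)} : Set ℝ) ×ˢ
          Set.Ioo (min (R.yc x) (R.yc y)) (max (R.yc x) (R.yc y))) ∩
          hBar (R.lo z) (R.hi z) (R.yc z)).Nonempty := by
      intro z
      rw [seg_inter_nonempty, seg_inter_nonempty, min_neg_neg, max_neg_neg]
      constructor
      · rintro ⟨h1, h2, h3⟩
        exact ⟨h1, neg_lt_neg_iff.1 h3, neg_lt_neg_iff.1 h2⟩
      · rintro ⟨h1, h2, h3⟩
        exact ⟨h1, neg_lt_neg h3, neg_lt_neg h2⟩
    refine (R.sight_one_bar x y hadj).anti ?_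
    intro z hz
    exact ⟨hz.1, hz.2.1, (hset z).1 hz.2.2⟩
end

/-- every represented graph has a representation with non-degenerate bars -/
lemma Bar1VisRep.fatten [Fintype V] (R : Bar1VisRep G) :
    ∃ R' : Bar1VisRep G, ∀ z : V, R'.lo z < R'.hi z := by
  classical
  set g1 : V × V → ℝ := fun p =>
    if R.yc p.1 = R.yc p.2 ∧ p.1 ≠ p.2 then
      max (R.lo p.2 - R.hi p.1) (R.lo p.1 - R.hi p.2) else 1 with hg1
  set g2 : V × V × V → ℝ := fun p =>
    if R.sight s(p.1, p.2.1) < R.lo p.2.2 then R.lo p.2.2 - R.sight s(p.1, p.2.1)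
    else if R.hi p.2.2 < R.sight s(p.1, p.2.1) then R.sight s(p.1, p.2.1) - R.hi p.2.2
    else 1 with hg2
  set D : Finset ℝ := insert 1 ((Finset.univ.image g1) ∪ (Finset.univ.image g2)) with hD
  have hDne : D.Nonempty := Finset.insert_nonempty _ _
  set δ : ℝ := D.min' hDne with hδ
  -- interval separation for bars at equal heights
  have hsep : ∀ x y : V, x ≠ y → R.yc x = R.yc y →
      R.hi x < R.lo y ∨ R.hi y < R.lo x := by
    intro x y hxy hyc
    by_contra hcon
    push_neg at hcon
    have hx1 : max (R.lo x) (R.lo y) ∈ Set.Icc (R.lo x) (R.hi x) :=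
      ⟨le_max_left _ _, max_le (R.lo_le_hi x) hcon.1⟩
    have hx2 : max (R.lo x) (R.lo y) ∈ Set.Icc (R.lo y) (R.hi y) :=
      ⟨le_max_right _ _, max_le hcon.2 (R.lo_le_hi y)⟩
    exact hBar_disjoint_iff.1 (R.bars_disjoint x y hxy) _ hx1 hx2 hyc
  have hδpos : 0 < δ := by
    rw [hδ]
    apply (Finset.lt_min'_iff _ _).2
    intro r hr
    rw [hD] at hr
    rcases Finset.mem_insert.1 hr with h | h
    · rw [h]; norm_num
    · rcases Finset.mem_union.1 h with h | h
      · obtain ⟨p, _, hp⟩ := Finset.mem_image.1 h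
        rw [← hp, hg1]
        by_cases hc : R.yc p.1 = R.yc p.2 ∧ p.1 ≠ p.2
        · simp only [if_pos hc]
          rcases hsep p.1 p.2 hc.2 hc.1 with h1 | h1
          · exact lt_max_of_lt_left (by linarith)
          · exact lt_max_of_lt_right (by linarith)
        · simp only [if_neg hc]; norm_num
      · obtain ⟨p, _, hp⟩ := Finset.mem_image.1 h
        rw [← hp, hg2]
        by_cases hc1 : R.sight s(p.1, p.2.1) < R.lo p.2.2
        · simp only [if_pos hc1]; linarith
        · simp only [if_neg hc1]
          by_cases hc2 : R.hi p.2.2 < R.sight s(p.1, p.2.1)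
          · simp only [if_pos hc2]; linarith
          · simp only [if_neg hc2]; norm_num
  have hδle : ∀ r ∈ D, δ ≤ r := fun r hr => Finset.min'_le _ r hr
  have hδg1 : ∀ x y : V, δ ≤ g1 (x, y) := fun x y =>
    hδle _ (Finset.mem_insert_of_mem (Finset.mem_union_left _
      (Finset.mem_image_of_mem _ (Finset.mem_univ _))))
  have hδg2 : ∀ x y z : V, δ ≤ g2 (x, y, z) := fun x y z =>
    hδle _ (Finset.mem_insert_of_mem (Finset.mem_union_right _
      (Finset.mem_image_of_mem _ (Finset.mem_univ _))))
  -- the sight stays on the old bar of z whenever it is on the fattened bar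
  have hsight : ∀ x y z : V, R.sight s(x, y) ∈ Set.Icc (R.lo z - δ/3) (R.hi z + δ/3) →
      R.sight s(x, y) ∈ Set.Icc (R.lo z) (R.hi z) := by
    intro x y z hmem
    have hg := hδg2 x y z
    rw [hg2] at hg
    simp only at hg
    by_cases hc1 : R.sight s(x, y) < R.lo z
    · rw [if_pos hc1] at hg
      have := hmem.1
      linarith
    · rw [if_neg hc1] at hg
      by_cases hc2 : R.hi z < R.sight s(x, y)
      · rw [if_pos hc2] at hg
        have := hmem.2
        linarith
      · exact ⟨not_lt.1 hc1, not_lt.1 hc2⟩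
  refine ⟨⟨fun z => R.lo z - δ/3, fun z => R.hi z + δ/3, R.yc, ?_, ?_, R.sight, ?_, ?_⟩, ?_⟩
  · intro z
    have := R.lo_le_hi z
    linarith
  · intro x y hxy
    by_cases hyc : R.yc x = R.yc y
    · have hg := hδg1 x y
      rw [hg1] at hg
      simp only [if_pos (show R.yc x = R.yc y ∧ x ≠ y from ⟨hyc, hxy⟩)] at hg
      rw [hBar_disjoint_iff]
      intro s h1 h2 _
      rcases hsep x y hxy hyc with h | h
      · have hmax : R.lo y - R.hi x ≤ max (R.lo y - R.hi x) (R.lo x - R.hi y) := le_max_left _ _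
        have : δ ≤ max (R.lo y - R.hi x) (R.lo x - R.hi y) := hg
        have hxle := h1.2
        have hyge := h2.1
        have hle : R.lo x ≤ R.hi y := by
          have := R.lo_le_hi x; have := R.lo_le_hi y; linarith
        have hmax2 : max (R.lo y - R.hi x) (R.lo x - R.hi y) = R.lo y - R.hi x :=
          max_eq_left (by linarith)
        rw [hmax2] at this
        linarith
      · have hle : R.lo y ≤ R.hi x := by
          have := R.lo_le_hi x; have := R.lo_le_hi y; linarith
        have hmax2 : max (R.lo y - R.hi x) (R.lo x - R.hi y) = R.lo x - R.hi y :=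
          max_eq_right (by linarith)
        rw [hmax2] at hg
        have hxle := h2.2
        have hyge := h1.1
        linarith
    · exact hBar_disjoint_of_ne hyc
  · intro x y hadj
    obtain ⟨h1, h2⟩ := R.sight_on_bars x y hadj
    constructor
    · exact ⟨by linarith [h1.1], by linarith [h1.2]⟩
    · exact ⟨by linarith [h2.1], by linarith [h2.2]⟩
  · intro x y hadj
    refine (R.sight_one_bar x y hadj).anti ?_
    intro z hz
    obtain ⟨hz1, hz2, hz3⟩ := hz
    rw [seg_inter_nonempty] at hz3
    exact ⟨hz1, hz2, seg_inter_nonempty.2 ⟨hsight x y z hz3.1, hz3.2⟩⟩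
  · intro z
    simp only
    have := R.lo_le_hi z
    linarith


section Builder

variable {V : Type} {G : SimpleGraph V}

attribute [local instance] Classical.propDecidable

/-- chain positions -/
def pos (u v : V) (t : ℕ) (j : Fin (t + 2)) : V ⊕ Fin t :=
  chainVertex (Sum.inl u) (Sum.inl v) (fun i => Sum.inr i) j

lemma pos_head {u v : V} {t : ℕ} {j : Fin (t + 2)} (h : (j : ℕ) = 0) :
    pos u v t j = Sum.inl u := by
  rw [pos, chainVertex, dif_pos h]

lemma pos_tail {u v : V} {t : ℕ} {j : Fin (t + 2)} (h : (j : ℕ) = t + 1) :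
    pos u v t j = Sum.inl v := by
  have h0 : (j : ℕ) ≠ 0 := by omega
  rw [pos, chainVertex, dif_neg h0, dif_pos h]

lemma pos_mid {u v : V} {t : ℕ} {j : Fin (t + 2)} (h0 : (j : ℕ) ≠ 0) (h1 : (j : ℕ) ≠ t + 1) :
    pos u v t j = Sum.inr ⟨(j : ℕ) - 1, by have := j.isLt; omega⟩ := by
  rw [pos, chainVertex, dif_neg h0, dif_neg h1]

lemma pathAdd_adj {u v : V} {t : ℕ} {x y : V ⊕ Fin t} :
    (pathAdd G u v t ∅).Adj x y ↔ x ≠ y ∧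
      ((∃ a b : V, G.Adj a b ∧ x = Sum.inl a ∧ y = Sum.inl b) ∨
        (∃ i : Fin (t + 1),
          (x = pos u v t i.castSucc ∧ y = pos u v t i.succ) ∨
          (x = pos u v t i.succ ∧ y = pos u v t i.castSucc))) := by
  rw [pathAdd, SimpleGraph.fromEdgeSet_adj, Set.union_empty]
  constructor
  · rintro ⟨hmem, hne⟩
    refine ⟨hne, ?_⟩
    rcases hmem with hmem | hmem
    · left
      obtain ⟨e, he, hmap⟩ := hmem
      induction e using Sym2.ind with
      | _ a b =>
        rw [Sym2.map_pair_eq, Sym2.eq_iff] at hmap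
        rcases hmap with ⟨h1, h2⟩ | ⟨h1, h2⟩
        · exact ⟨a, b, G.mem_edgeSet.1 he, h1.symm, h2.symm⟩
        · exact ⟨b, a, (G.mem_edgeSet.1 he).symm, h2.symm, h1.symm⟩
    · right
      obtain ⟨i, he⟩ := hmem
      rw [Sym2.eq_iff] at he
      rcases he with ⟨h1, h2⟩ | ⟨h1, h2⟩
      · exact ⟨i, Or.inl ⟨h1, h2⟩⟩
      · exact ⟨i, Or.inr ⟨h1, h2⟩⟩
  · rintro ⟨hne, hcase⟩
    refine ⟨?_, hne⟩
    rcases hcase with ⟨a, b, hadj, hx, hy⟩ | ⟨i, hi⟩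
    · left
      exact ⟨s(a, b), G.mem_edgeSet.2 hadj, by rw [hx, hy, Sym2.map_pair_eq]⟩
    · right
      refine ⟨i, ?_⟩
      rcases hi with ⟨hx, hy⟩ | ⟨hx, hy⟩
      · rw [hx, hy]; rfl
      · rw [hx, hy]; exact Sym2.eq_swap

variable (R : Bar1VisRep G) (u v : V) (t : ℕ) (xlo xhi ynew : Fin t → ℝ)
  (cs : Fin (t + 1) → ℝ)

/-- the sight function for the extended representation -/
noncomputable def fsight : (V ⊕ Fin t) → (V ⊕ Fin t) → ℝ
  | Sum.inl a, Sum.inl b => if G.Adj a b then R.sight s(a, b) else cs 0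
  | Sum.inl a, Sum.inr _ => if a = v then cs (Fin.last t) else cs 0
  | Sum.inr _, Sum.inl a => if a = v then cs (Fin.last t) else cs 0
  | Sum.inr i, Sum.inr j =>
      cs ⟨min (i : ℕ) (j : ℕ) + 1, by have := i.isLt; have := j.isLt; omega⟩

lemma fsight_symm : ∀ x y : V ⊕ Fin t,
    fsight R v t cs x y = fsight R v t cs y x := by
  rintro (a | i) (b | j)
  · show (if G.Adj a b then R.sight s(a, b) else cs 0) =
      (if G.Adj b a then R.sight s(b, a) else cs 0)
    rw [G.adj_comm a b, Sym2.eq_swap]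
  · rfl
  · rfl
  · show cs ⟨min (i : ℕ) (j : ℕ) + 1, _⟩ = cs ⟨min (j : ℕ) (i : ℕ) + 1, _⟩
    congr 1
    exact Fin.ext (by simp [min_comm])

/-- the sight function on unordered pairs -/
noncomputable def nsight : Sym2 (V ⊕ Fin t) → ℝ :=
  Sym2.lift ⟨fsight R v t cs, fsight_symm R v t cs⟩

lemma nsight_mk (x y : V ⊕ Fin t) : nsight R v t cs s(x, y) = fsight R v t cs x y := rfl

lemma nsight_chain (huv : u ≠ v) (i : Fin (t + 1))
    (h : ¬ ∃ a b : V, pos u v t i.castSucc = Sum.inl a ∧ pos u v t i.succ = Sum.inl b ∧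
      G.Adj a b) :
    nsight R v t cs s(pos u v t i.castSucc, pos u v t i.succ) = cs i := by
  have hc : (i.castSucc : ℕ) = (i : ℕ) := rfl
  have hs : (i.succ : ℕ) = (i : ℕ) + 1 := rfl
  by_cases h0 : (i : ℕ) = 0
  · by_cases ht : t = 0
    · -- edge from u to v directly
      subst ht
      rw [pos_head (by omega), pos_tail (by omega), nsight_mk]
      show (if G.Adj u v then R.sight s(u, v) else cs 0) = cs i
      rw [if_neg, Subsingleton.elim (0 : Fin 1) i]
      intro hadj
      exact h ⟨u, v, pos_head (by omega), pos_tail (by omega), hadj⟩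
    · -- edge from u to the first interior vertex
      rw [pos_head (by omega), pos_mid (by omega) (by omega), nsight_mk]
      show (if u = v then cs (Fin.last t) else cs 0) = cs i
      rw [if_neg huv]
      congr 1
      exact Fin.ext (by simp [h0])
  · by_cases ht : (i : ℕ) = t
    · -- edge from the last interior vertex to v
      rw [pos_mid (by omega) (by omega), pos_tail (by omega), nsight_mk]
      show (if v = v then cs (Fin.last t) else cs 0) = cs i
      rw [if_pos rfl]
      congr 1
      exact Fin.ext (by simp [Fin.last, ht])
    · -- edge between two interior vertices
      have hlt := i.isLt
      rw [pos_mid (by omega) (by omega), pos_mid (by omega) (by omega), nsight_mk]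
      show cs ⟨min ((i : ℕ) - 1) ((i : ℕ) + 1 - 1) + 1, _⟩ = cs i
      congr 1
      exact Fin.ext (by simp; omega)

lemma blockset_comm {W : Type} (lo hi yc : W → ℝ) (s : ℝ) (x y : W) :
    {z : W | z ≠ x ∧ z ≠ y ∧
      ((({s} : Set ℝ) ×ˢ Set.Ioo (min (yc x) (yc y)) (max (yc x) (yc y))) ∩
        hBar (lo z) (hi z) (yc z)).Nonempty} =
    {z : W | z ≠ y ∧ z ≠ x ∧
      ((({s} : Set ℝ) ×ˢ Set.Ioo (min (yc y) (yc x)) (max (yc y) (yc x))) ∩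
        hBar (lo z) (hi z) (yc z)).Nonempty} := by
  ext z
  rw [min_comm (yc y) (yc x), max_comm (yc y) (yc x)]
  exact ⟨fun ⟨h1, h2, h3⟩ => ⟨h2, h1, h3⟩, fun ⟨h1, h2, h3⟩ => ⟨h2, h1, h3⟩⟩

/-- Assemble a representation of the path-extended graph from data for the new bars. -/
lemma build (huv : u ≠ v)
    (B1 : ∀ j, xlo j ≤ xhi j)
    (B2 : ∀ i j : Fin t, i ≠ j →
      Disjoint (hBar (xlo i) (xhi i) (ynew i)) (hBar (xlo j) (xhi j) (ynew j)))
    (B3 : ∀ (j : Fin t) (z : V),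
      Disjoint (hBar (xlo j) (xhi j) (ynew j)) (hBar (R.lo z) (R.hi z) (R.yc z)))
    (B4 : ∀ i : Fin (t + 1),
      cs i ∈ Set.Icc (Sum.elim R.lo xlo (pos u v t i.castSucc))
        (Sum.elim R.hi xhi (pos u v t i.castSucc)) ∧
      cs i ∈ Set.Icc (Sum.elim R.lo xlo (pos u v t i.succ))
        (Sum.elim R.hi xhi (pos u v t i.succ)))
    (B5 : ∀ i : Fin (t + 1),
      {z : V ⊕ Fin t | z ≠ pos u v t i.castSucc ∧ z ≠ pos u v t i.succ ∧
        ((({cs i} : Set ℝ) ×ˢ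
          Set.Ioo (min (Sum.elim R.yc ynew (pos u v t i.castSucc))
              (Sum.elim R.yc ynew (pos u v t i.succ)))
            (max (Sum.elim R.yc ynew (pos u v t i.castSucc))
              (Sum.elim R.yc ynew (pos u v t i.succ)))) ∩
          hBar (Sum.elim R.lo xlo z) (Sum.elim R.hi xhi z)
            (Sum.elim R.yc ynew z)).Nonempty}.Subsingleton)
    (B6 : ∀ a b : V, G.Adj a b → ∀ j : Fin t,
      ¬(R.sight s(a, b) ∈ Set.Icc (xlo j) (xhi j) ∧
        ynew j ∈ Set.Ioo (min (R.yc a) (R.yc b)) (max (R.yc a) (R.yc b)))) :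
    Nonempty (Bar1VisRep (pathAdd G u v t ∅)) := by
  -- treatment of old edges
  have hold : ∀ a b : V, G.Adj a b →
      {z : V ⊕ Fin t | z ≠ Sum.inl a ∧ z ≠ Sum.inl b ∧
        ((({R.sight s(a, b)} : Set ℝ) ×ˢ
          Set.Ioo (min (R.yc a) (R.yc b)) (max (R.yc a) (R.yc b))) ∩
          hBar (Sum.elim R.lo xlo z) (Sum.elim R.hi xhi z)
            (Sum.elim R.yc ynew z)).Nonempty}.Subsingleton := by
    intro a b hadj
    refine Set.Subsingleton.anti ((R.sight_one_bar a b hadj).image Sum.inl) ?_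
    rintro (w | j) ⟨hz1, hz2, hz3⟩
    · exact ⟨w, ⟨fun hw => hz1 (by rw [hw]), fun hw => hz2 (by rw [hw]), hz3⟩, rfl⟩
    · rw [seg_inter_nonempty] at hz3
      exact absurd ⟨hz3.1, hz3.2⟩ (B6 a b hadj j)
  refine ⟨⟨Sum.elim R.lo xlo, Sum.elim R.hi xhi, Sum.elim R.yc ynew, ?_, ?_,
    nsight R v t cs, ?_, ?_⟩⟩
  · rintro (z | j)
    · exact R.lo_le_hi z
    · exact B1 j
  · rintro (a | i) (b | j) hne
    · exact R.bars_disjoint a b (fun h => hne (by rw [h]))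
    · exact (B3 j a).symm
    · exact B3 i b
    · exact B2 i j (fun h => hne (by rw [h]))
  · intro x y hadj
    rcases pathAdd_adj.1 hadj with ⟨hne, ⟨a, b, hab, hx, hy⟩ | ⟨i, hi⟩⟩
    · subst hx; subst hy
      rw [nsight_mk]
      show (if G.Adj a b then R.sight s(a, b) else cs 0) ∈ _ ∧
        (if G.Adj a b then R.sight s(a, b) else cs 0) ∈ _
      rw [if_pos hab]
      exact R.sight_on_bars a b hab
    · by_cases hG : ∃ a b : V, pos u v t i.castSucc = Sum.inl a ∧ pos u v t i.succ = Sum.inl b ∧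
        G.Adj a b
      · obtain ⟨a, b, hpa, hpb, hab⟩ := hG
        have hxy : (x = Sum.inl a ∧ y = Sum.inl b) ∨ (x = Sum.inl b ∧ y = Sum.inl a) := by
          rcases hi with ⟨hx, hy⟩ | ⟨hx, hy⟩
          · exact Or.inl ⟨hx.trans hpa, hy.trans hpb⟩
          · exact Or.inr ⟨hx.trans hpb, hy.trans hpa⟩
        rcases hxy with ⟨hx, hy⟩ | ⟨hx, hy⟩ <;> subst hx <;> subst hy <;> rw [nsight_mk]
        · show (if G.Adj a b then R.sight s(a, b) else cs 0) ∈ _ ∧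
            (if G.Adj a b then R.sight s(a, b) else cs 0) ∈ _
          rw [if_pos hab]
          exact R.sight_on_bars a b hab
        · show (if G.Adj b a then R.sight s(b, a) else cs 0) ∈ _ ∧
            (if G.Adj b a then R.sight s(b, a) else cs 0) ∈ _
          rw [if_pos hab.symm, Sym2.eq_swap]
          exact (R.sight_on_bars a b hab).symm
      · have hval := nsight_chain R u v t cs huv i hG
        rcases hi with ⟨hx, hy⟩ | ⟨hx, hy⟩
        · subst hx; subst hy
          rw [hval]
          exact ⟨(B4 i).1, (B4 i).2⟩
        · subst hx; subst hy
          rw [Sym2.eq_swap, hval]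
          exact ⟨(B4 i).2, (B4 i).1⟩
  · intro x y hadj
    rcases pathAdd_adj.1 hadj with ⟨hne, ⟨a, b, hab, hx, hy⟩ | ⟨i, hi⟩⟩
    · subst hx; subst hy
      have hval : nsight R v t cs s(Sum.inl a, Sum.inl b) = R.sight s(a, b) := by
        rw [nsight_mk]
        show (if G.Adj a b then R.sight s(a, b) else cs 0) = _
        rw [if_pos hab]
      rw [hval]
      exact hold a b hab
    · by_cases hG : ∃ a b : V, pos u v t i.castSucc = Sum.inl a ∧ pos u v t i.succ = Sum.inl b ∧
        G.Adj a b
      · obtain ⟨a, b, hpa, hpb, hab⟩ := hG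
        have hxy : (x = Sum.inl a ∧ y = Sum.inl b) ∨ (x = Sum.inl b ∧ y = Sum.inl a) := by
          rcases hi with ⟨hx, hy⟩ | ⟨hx, hy⟩
          · exact Or.inl ⟨hx.trans hpa, hy.trans hpb⟩
          · exact Or.inr ⟨hx.trans hpb, hy.trans hpa⟩
        rcases hxy with ⟨hx, hy⟩ | ⟨hx, hy⟩ <;> subst hx <;> subst hy
        · have hval : nsight R v t cs s(Sum.inl a, Sum.inl b) = R.sight s(a, b) := by
            rw [nsight_mk]
            show (if G.Adj a b then R.sight s(a, b) else cs 0) = _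
            rw [if_pos hab]
          rw [hval]
          exact hold a b hab
        · have hval : nsight R v t cs s(Sum.inl b, Sum.inl a) = R.sight s(a, b) := by
            rw [nsight_mk]
            show (if G.Adj b a then R.sight s(b, a) else cs 0) = _
            rw [if_pos hab.symm, Sym2.eq_swap]
          rw [hval, blockset_comm]
          exact hold a b hab
      · have hval := nsight_chain R u v t cs huv i hG
        rcases hi with ⟨hx, hy⟩ | ⟨hx, hy⟩
        · subst hx; subst hy
          rw [hval]
          exact B5 i
        · subst hx; subst hy
          rw [Sym2.eq_swap, hval, blockset_comm]
          exact B5 i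

end Builder


section Cases

variable {V : Type} {G : SimpleGraph V}

lemma caseA [Fintype V] (R : Bar1VisRep G)
    (u v : V) (huv : u ≠ v) (t : ℕ) (ht : Fintype.card V ≤ t + 2)
    (c : ℝ) (hcu : c ∈ Set.Ioo (R.lo u) (R.hi u)) (hcv : c ∈ Set.Ioo (R.lo v) (R.hi v))
    (hcS : ∀ e : Sym2 V, R.sight e ≠ c)
    (hvu : R.yc v < R.yc u) :
    Nonempty (Bar1VisRep (pathAdd G u v t ∅)) := by
  classical
  set Bset : Finset V := Finset.univ.filter
    (fun z => c ∈ Set.Icc (R.lo z) (R.hi z) ∧ R.yc z ∈ Set.Ioo (R.yc v) (R.yc u)) with hBset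
  set Bv : Finset ℝ := Bset.image R.yc with hBv
  have hBsetmem : ∀ z : V, z ∈ Bset ↔
      c ∈ Set.Icc (R.lo z) (R.hi z) ∧ R.yc z ∈ Set.Ioo (R.yc v) (R.yc u) := by
    intro z
    rw [hBset, Finset.mem_filter]
    exact ⟨fun h => h.2, fun h => ⟨Finset.mem_univ z, h⟩⟩
  have hBmem : ∀ b ∈ Bv, b ∈ Set.Ioo (R.yc v) (R.yc u) := by
    intro b hb
    obtain ⟨z, hz, rfl⟩ := Finset.mem_image.1 hb
    exact ((hBsetmem z).1 hz).2
  have hk : Bv.card ≤ t := by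
    have h1 : Bset ⊆ (Finset.univ.erase v).erase u := by
      intro z hz
      have hz2 := (hBsetmem z).1 hz
      refine Finset.mem_erase.2 ⟨fun h => ?_, Finset.mem_erase.2 ⟨fun h => ?_, Finset.mem_univ z⟩⟩
      · rw [h] at hz2; exact lt_irrefl _ hz2.2.2
      · rw [h] at hz2; exact lt_irrefl _ hz2.2.1
    have h2 := Finset.card_le_card h1
    have h3 : ((Finset.univ.erase v).erase u).card = Fintype.card V - 2 := by
      rw [Finset.card_erase_of_mem (Finset.mem_erase.2 ⟨huv, Finset.mem_univ u⟩),
        Finset.card_erase_of_mem (Finset.mem_univ v), Finset.card_univ]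
      omega
    have h4 : Bv.card ≤ Bset.card := Finset.card_image_le
    omega
  obtain ⟨H, H0, Hstep, Hβ, Hsub, Hcard, HnotB⟩ := ladder Bv (R.yc u) (R.yc v) hvu hBmem
  have Hmono : StrictAnti H := strictAnti_nat_of_succ_lt Hstep
  set xlo : Fin t → ℝ := fun _ => c with hxlo
  set ynew : Fin t → ℝ := fun j => H ((j : ℕ) + 1) with hynew
  set cs : Fin (t + 1) → ℝ := fun _ => c with hcs
  set totalH : Fin (t + 2) → ℝ := fun j => if (j : ℕ) = t + 1 then R.yc v else H j with htotal
  have htot : ∀ j : Fin (t + 2), Sum.elim R.yc ynew (pos u v t j) = totalH j := by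
    intro j
    by_cases h0 : (j : ℕ) = 0
    · rw [pos_head h0]
      show R.yc u = totalH j
      simp only [htotal]
      rw [if_neg (show ¬ (j : ℕ) = t + 1 by omega), h0, H0]
    · by_cases h1 : (j : ℕ) = t + 1
      · rw [pos_tail h1]
        show R.yc v = totalH j
        simp only [htotal]
        rw [if_pos h1]
      · rw [pos_mid h0 h1]
        show H ((j : ℕ) - 1 + 1) = totalH j
        simp only [htotal]
        rw [if_neg h1]
        congr 1
        omega
  -- totalH is strictly decreasing along the chain
  have htotlt : ∀ i : Fin (t + 1), totalH i.succ < totalH i.castSucc := by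
    intro i
    have hcv' : (i.castSucc : ℕ) = (i : ℕ) := rfl
    have hsv : (i.succ : ℕ) = (i : ℕ) + 1 := rfl
    simp only [htotal, hcv', hsv]
    rw [if_neg (show ¬ (i : ℕ) = t + 1 by have := i.isLt; omega)]
    by_cases h1 : (i : ℕ) + 1 = t + 1
    · rw [if_pos h1]
      have h2 : (i : ℕ) = t := by omega
      rw [h2]
      exact Hβ t
    · rw [if_neg h1]
      exact Hstep _
  have htotub : ∀ j : Fin (t + 2), totalH j ≤ R.yc u := by
    intro j
    simp only [htotal]
    by_cases h1 : (j : ℕ) = t + 1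
    · rw [if_pos h1]; exact le_of_lt hvu
    · rw [if_neg h1]
      rw [← H0]
      exact Hmono.antitone (Nat.zero_le _)
  have htotlb : ∀ j : Fin (t + 2), R.yc v ≤ totalH j := by
    intro j
    simp only [htotal]
    by_cases h1 : (j : ℕ) = t + 1
    · rw [if_pos h1]
    · rw [if_neg h1]; exact le_of_lt (Hβ _)
  -- the two candidate blockers of a chain edge coincide
  have hBvsub : ∀ i : Fin (t + 1), ∀ b ∈ Bv, ∀ b' ∈ Bv,
      b ∈ Set.Ioo (totalH i.succ) (totalH i.castSucc) →
      b' ∈ Set.Ioo (totalH i.succ) (totalH i.castSucc) → b = b' := by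
    intro i b hb b' hb' hbI hbI'
    have hcv' : (i.castSucc : ℕ) = (i : ℕ) := rfl
    have hsv : (i.succ : ℕ) = (i : ℕ) + 1 := rfl
    simp only [htotal, hcv', hsv] at hbI hbI'
    rw [if_neg (show ¬ (i : ℕ) = t + 1 by have := i.isLt; omega)] at hbI hbI'
    by_cases h1 : (i : ℕ) + 1 = t + 1
    · rw [if_pos h1] at hbI hbI'
      -- interval (yc v, H t) with t ≥ Bv.card : empty
      exfalso
      have hit : (i : ℕ) = t := by omega
      rw [hit] at hbI
      have hmem : b ∈ Bv.filter (fun x => x < H t) :=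
        Finset.mem_filter.2 ⟨hb, hbI.2⟩
      have hc := Hcard t
      have : (Bv.filter (fun x => x < H t)).card = 0 := by omega
      rw [Finset.card_eq_zero] at this
      rw [this] at hmem
      exact absurd hmem (Finset.notMem_empty _)
    · rw [if_neg h1] at hbI hbI'
      exact Hsub (i : ℕ) b hb b' hb' hbI hbI'
  refine build R u v t xlo xlo ynew cs huv (fun j => le_refl c) ?_ ?_ ?_ ?_ ?_
  · -- B2 : new bars pairwise disjoint
    intro i j hij
    apply hBar_disjoint_of_ne
    rw [hynew]
    intro h
    exact hij (Fin.ext (by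
      have := Hmono.injective h
      omega))
  · -- B3 : new bars disjoint from old bars
    intro j z
    by_cases hc : c ∈ Set.Icc (R.lo z) (R.hi z)
    · apply hBar_disjoint_of_ne
      rw [hynew]
      simp only
      rcases lt_trichotomy (R.yc z) (R.yc u) with hlt | heq | hgt
      · rcases le_or_gt (R.yc z) (R.yc v) with hle | hgt2
        · intro h
          have := Hβ ((j : ℕ) + 1)
          rw [h] at this; linarith
        · -- z is a blocker
          have hzB : R.yc z ∈ Bv :=
            Finset.mem_image_of_mem _ ((hBsetmem z).2 ⟨hc, hgt2, hlt⟩)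
          intro h
          exact HnotB (j : ℕ) (h ▸ hzB)
      · intro h
        have : H ((j : ℕ) + 1) < H 0 := Hmono (Nat.succ_pos _)
        rw [H0] at this
        rw [h, heq] at this
        exact lt_irrefl _ this
      · intro h
        have : H ((j : ℕ) + 1) < H 0 := Hmono (Nat.succ_pos _)
        rw [H0] at this
        rw [h] at this
        linarith
    · apply hBar_disjoint_of_x
      intro x hx
      have : x = c := le_antisymm hx.2 hx.1
      rw [this]
      exact hc
  · -- B4 : sights on bars
    have hgen : ∀ j : Fin (t + 2), c ∈ Set.Icc (Sum.elim R.lo xlo (pos u v t j))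
        (Sum.elim R.hi xlo (pos u v t j)) := by
      intro j
      by_cases h0 : (j : ℕ) = 0
      · rw [pos_head h0]
        exact ⟨le_of_lt hcu.1, le_of_lt hcu.2⟩
      · by_cases h1 : (j : ℕ) = t + 1
        · rw [pos_tail h1]
          exact ⟨le_of_lt hcv.1, le_of_lt hcv.2⟩
        · rw [pos_mid h0 h1]
          exact ⟨le_refl c, le_refl c⟩
    exact fun i => ⟨hgen i.castSucc, hgen i.succ⟩
  · -- B5 : chain edges see at most one other bar
    intro i
    have hmin : min (Sum.elim R.yc ynew (pos u v t i.castSucc))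
        (Sum.elim R.yc ynew (pos u v t i.succ)) = totalH i.succ := by
      rw [htot, htot]
      exact min_eq_right (le_of_lt (htotlt i))
    have hmax : max (Sum.elim R.yc ynew (pos u v t i.castSucc))
        (Sum.elim R.yc ynew (pos u v t i.succ)) = totalH i.castSucc := by
      rw [htot, htot]
      exact max_eq_left (le_of_lt (htotlt i))
    rw [hmin, hmax]
    -- no interior vertex lies strictly inside a chain edge segment
    have hinr : ∀ j : Fin t, Sum.inr j ≠ pos u v t i.castSucc → Sum.inr j ≠ pos u v t i.succ →
        ynew j ∉ Set.Ioo (totalH i.succ) (totalH i.castSucc) := by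
      intro j hj1 hj2 hmem
      -- ynew j = totalH (j+1)
      have hjpos : Sum.elim R.yc ynew (pos u v t ⟨(j : ℕ) + 1, by have := j.isLt; omega⟩) =
          ynew j := by
        rw [pos_mid (by simp) (by have := j.isLt; simp; omega)]
        show ynew ⟨(j : ℕ) + 1 - 1, _⟩ = ynew j
        exact congrArg ynew (Fin.ext (by simp))
      rw [← hjpos, htot] at hmem
      set jp : Fin (t + 2) := ⟨(j : ℕ) + 1, by have := j.isLt; omega⟩ with hjp
      -- totalH is injective-monotone; jp strictly between i and i+1 : impossible
      have hlt1 : totalH jp < totalH i.castSucc := hmem.2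
      have hlt2 : totalH i.succ < totalH jp := hmem.1
      have hmono : ∀ p q : Fin (t + 2), (p : ℕ) ≤ (q : ℕ) → totalH q ≤ totalH p := by
        intro p q hpq
        simp only [htotal]
        by_cases hq : (q : ℕ) = t + 1
        · rw [if_pos hq]
          by_cases hp : (p : ℕ) = t + 1
          · rw [if_pos hp]
          · rw [if_neg hp]
            exact le_of_lt (Hβ _)
        · rw [if_neg hq, if_neg (show ¬ (p : ℕ) = t + 1 by omega)]
          exact Hmono.antitone hpq
      have h1 : (jp : ℕ) < (i.succ : ℕ) := by
        by_contra hcon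
        push_neg at hcon
        exact absurd (hmono _ _ hcon) (not_le.2 hlt2)
      have h2 : (i.castSucc : ℕ) < (jp : ℕ) := by
        by_contra hcon
        push_neg at hcon
        exact absurd (hmono _ _ hcon) (not_le.2 hlt1)
      have e1 : (i.succ : ℕ) = (i : ℕ) + 1 := rfl
      have e2 : (i.castSucc : ℕ) = (i : ℕ) := rfl
      have e3 : (jp : ℕ) = (j : ℕ) + 1 := rfl
      omega
    intro z1 hz1 z2 hz2
    obtain ⟨h11, h12, h13⟩ := hz1
    obtain ⟨h21, h22, h23⟩ := hz2
    rw [seg_inter_nonempty] at h13 h23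
    match z1, z2 with
    | Sum.inr j, _ => exact absurd h13.2 (hinr j h11 h12)
    | Sum.inl w, Sum.inr j => exact absurd h23.2 (hinr j h21 h22)
    | Sum.inl w1, Sum.inl w2 =>
      -- both are old bars strictly inside the segment
      have hmemB : ∀ w : V, c ∈ Set.Icc (R.lo w) (R.hi w) →
          R.yc w ∈ Set.Ioo (totalH i.succ) (totalH i.castSucc) → R.yc w ∈ Bv := by
        intro w hcw hIoo
        refine Finset.mem_image_of_mem _ ((hBsetmem w).2 ⟨hcw, ?_, ?_⟩)
        · exact lt_of_le_of_lt (htotlb i.succ) hIoo.1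
        · exact lt_of_lt_of_le hIoo.2 (htotub i.castSucc)
      have hyeq : R.yc w1 = R.yc w2 :=
        hBvsub i _ (hmemB w1 h13.1 h13.2) _ (hmemB w2 h23.1 h23.2) h13.2 h23.2
      exact congrArg Sum.inl (R.col_inj h13.1 h23.1 hyeq)
  · -- B6 : new bars do not affect old edges
    intro a b hadj j hmem
    exact hcS s(a, b) (le_antisymm hmem.1.2 hmem.1.1)

lemma caseB [Fintype V] (R : Bar1VisRep G)
    (u v : V) (huv : u ≠ v) (t : ℕ) (ht1 : 1 ≤ t)
    (cu cv : ℝ)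
    (hcu : cu ∈ Set.Ioo (R.lo u) (R.hi u)) (hcv : cv ∈ Set.Ioo (R.lo v) (R.hi v))
    (hcuS : ∀ e : Sym2 V, R.sight e ≠ cu) (hcvS : ∀ e : Sym2 V, R.sight e ≠ cv)
    (hcu_v : cu ∉ Set.Icc (R.lo v) (R.hi v)) (hcv_u : cv ∉ Set.Icc (R.lo u) (R.hi u))
    (Bu Bw : Finset V)
    (hBu : ∀ z : V, z ∈ Bu ↔ (cu ∈ Set.Icc (R.lo z) (R.hi z) ∧ R.yc z < R.yc u))
    (hBw : ∀ z : V, z ∈ Bw ↔ (cv ∈ Set.Icc (R.lo z) (R.hi z) ∧ R.yc z < R.yc v))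
    (hroute : Bu.card - 1 + (Bw.card - 1) ≤ t - 1) :
    Nonempty (Bar1VisRep (pathAdd G u v t ∅)) := by
  classical
  have hcucv : cu ≠ cv := fun h => hcu_v (h ▸ Set.Ioo_subset_Icc_self hcv)
  -- the floor level
  set yA : ℝ := (Finset.univ.image R.yc).min' (Finset.image_nonempty.2 ⟨u, Finset.mem_univ u⟩)
    - 1 with hyAdef
  have hyA : ∀ z : V, yA < R.yc z := by
    intro z
    have := Finset.min'_le (Finset.univ.image R.yc)
      (R.yc z) (Finset.mem_image_of_mem _ (Finset.mem_univ z))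
    rw [hyAdef]; linarith
  -- blocker level sets
  set BuV : Finset ℝ := Bu.image R.yc with hBuV
  set BwV : Finset ℝ := Bw.image R.yc with hBwV
  have hBuVmem : ∀ b ∈ BuV, b ∈ Set.Ioo yA (R.yc u) := by
    intro b hb
    obtain ⟨z, hz, rfl⟩ := Finset.mem_image.1 hb
    exact ⟨hyA z, ((hBu z).1 hz).2⟩
  have hBwVmem : ∀ b ∈ BwV, b ∈ Set.Ioo yA (R.yc v) := by
    intro b hb
    obtain ⟨z, hz, rfl⟩ := Finset.mem_image.1 hb
    exact ⟨hyA z, ((hBw z).1 hz).2⟩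
  have hBuVcard : BuV.card = Bu.card :=
    Finset.card_image_of_injOn (fun z1 h1 z2 h2 h =>
      R.col_inj ((hBu z1).1 h1).1 ((hBu z2).1 h2).1 h)
  have hBwVcard : BwV.card = Bw.card :=
    Finset.card_image_of_injOn (fun z1 h1 z2 h2 h =>
      R.col_inj ((hBw z1).1 h1).1 ((hBw z2).1 h2).1 h)
  obtain ⟨Hu, Hu0, HuStep, HuB, HuSub, HuCard, HuNot⟩ :=
    ladder BuV (R.yc u) yA (hyA u) hBuVmem
  obtain ⟨Hv, Hv0, HvStep, HvB, HvSub, HvCard, HvNot⟩ :=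
    ladder BwV (R.yc v) yA (hyA v) hBwVmem
  have HuMono : StrictAnti Hu := strictAnti_nat_of_succ_lt HuStep
  have HvMono : StrictAnti Hv := strictAnti_nat_of_succ_lt HvStep
  -- the split point : bars 0,…,D-1 sit on column cu, bar D is the floor bar,
  -- bars D+1,…,t-1 sit on column cv
  set D : ℕ := t - 1 - (Bw.card - 1) with hD
  have hDle : D ≤ t - 1 := by omega
  have hkD : Bu.card ≤ D + 1 := by omega
  have hmD : Bw.card ≤ t - D := by omega
  have hmD' : Bw.card - 1 = t - 1 - D := by omega
  -- bar data
  set xlo : Fin t → ℝ := fun j =>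
    if (j : ℕ) < D then cu else if (j : ℕ) = D then min cu cv else cv with hxlo
  set xhi : Fin t → ℝ := fun j =>
    if (j : ℕ) < D then cu else if (j : ℕ) = D then max cu cv else cv with hxhi
  set ynew : Fin t → ℝ := fun j =>
    if (j : ℕ) < D then Hu ((j : ℕ) + 1) else if (j : ℕ) = D then yA
    else Hv (t - (j : ℕ)) with hynew
  set cs : Fin (t + 1) → ℝ := fun i => if (i : ℕ) ≤ D then cu else cv with hcs
  -- the height profile along the chain
  set totB : ℕ → ℝ := fun p =>
    if p ≤ D then Hu p else if p = D + 1 then yA else Hv (t + 1 - p) with htotB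
  have htot : ∀ p : Fin (t + 2), Sum.elim R.yc ynew (pos u v t p) = totB (p : ℕ) := by
    intro p
    by_cases h0 : (p : ℕ) = 0
    · rw [pos_head h0]
      show R.yc u = totB (p : ℕ)
      simp only [htotB]
      rw [h0, if_pos (Nat.zero_le D), Hu0]
    · by_cases h1 : (p : ℕ) = t + 1
      · rw [pos_tail h1]
        show R.yc v = totB (p : ℕ)
        simp only [htotB]
        rw [h1, if_neg (by omega), if_neg (by omega)]
        have : t + 1 - (t + 1) = 0 := by omega
        rw [this, Hv0]
      · rw [pos_mid h0 h1]
        show ynew ⟨(p : ℕ) - 1, _⟩ = totB (p : ℕ)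
        simp only [hynew, htotB]
        by_cases h2 : (p : ℕ) ≤ D
        · rw [if_pos (show (p : ℕ) - 1 < D by omega), if_pos h2]
          congr 1
          omega
        · by_cases h3 : (p : ℕ) = D + 1
          · rw [if_neg (by omega), if_pos (by omega), if_neg h2, if_pos h3]
          · rw [if_neg (by omega), if_neg (by omega), if_neg h2, if_neg h3]
            congr 1
            omega
  -- monotonicity of the profile on the two sides
  have hanti : ∀ p q : ℕ, p ≤ q → q ≤ D + 1 → totB q ≤ totB p := by
    intro p q hpq hq
    simp only [htotB]
    by_cases hq1 : q ≤ D
    · rw [if_pos hq1, if_pos (by omega)]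
      exact HuMono.antitone hpq
    · have hq2 : q = D + 1 := by omega
      rw [if_neg hq1, if_pos hq2]
      by_cases hp1 : p ≤ D
      · rw [if_pos hp1]
        exact le_of_lt (HuB p)
      · rw [if_neg hp1, if_pos (by omega)]
  have hmono : ∀ p q : ℕ, D + 1 ≤ p → p ≤ q → totB p ≤ totB q := by
    intro p q hp hpq
    simp only [htotB]
    rw [if_neg (by omega : ¬ p ≤ D), if_neg (by omega : ¬ q ≤ D)]
    by_cases hp1 : p = D + 1
    · rw [if_pos hp1]
      by_cases hq1 : q = D + 1
      · rw [if_pos hq1]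
      · rw [if_neg hq1]
        exact le_of_lt (HvB _)
    · rw [if_neg hp1, if_neg (by omega : ¬ q = D + 1)]
      exact HvMono.antitone (by omega)
  have hstepL : ∀ p : ℕ, p + 1 ≤ D + 1 → totB (p + 1) < totB p := by
    intro p hp
    simp only [htotB]
    rw [if_pos (by omega : p ≤ D)]
    by_cases h1 : p + 1 ≤ D
    · rw [if_pos h1]
      exact HuStep p
    · rw [if_neg h1, if_pos (by omega)]
      exact HuB p
  have hstepR : ∀ p : ℕ, D + 1 ≤ p → p + 1 ≤ t + 1 → totB p < totB (p + 1) := by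
    intro p hp hp1
    simp only [htotB]
    rw [if_neg (by omega : ¬ p ≤ D), if_neg (by omega : ¬ p + 1 ≤ D),
      if_neg (by omega : ¬ p + 1 = D + 1)]
    by_cases h1 : p = D + 1
    · rw [if_pos h1]
      exact HvB _
    · rw [if_neg h1]
      have : t + 1 - p = (t + 1 - (p + 1)) + 1 := by omega
      rw [this]
      exact HvStep _
  have hyAle : ∀ p : ℕ, p ≤ t + 1 → yA ≤ totB p := by
    intro p hp
    simp only [htotB]
    by_cases h1 : p ≤ D
    · rw [if_pos h1]; exact le_of_lt (HuB p)
    · rw [if_neg h1]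
      by_cases h2 : p = D + 1
      · rw [if_pos h2]
      · rw [if_neg h2]; exact le_of_lt (HvB _)
  refine build R u v t xlo xhi ynew cs huv ?_ ?_ ?_ ?_ ?_ ?_
  · -- B1
    intro j
    simp only [hxlo, hxhi]
    by_cases h1 : (j : ℕ) < D
    · simp only [if_pos h1]
      exact le_refl cu
    · simp only [if_neg h1]
      by_cases h2 : (j : ℕ) = D
      · simp only [if_pos h2]
        exact min_le_max
      · simp only [if_neg h2]
        exact le_refl cv
  · -- B2 : new bars pairwise disjoint
    intro i j hij
    have key : ∀ i j : Fin t, (i : ℕ) < (j : ℕ) →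
        Disjoint (hBar (xlo i) (xhi i) (ynew i)) (hBar (xlo j) (xhi j) (ynew j)) := by
      intro i j hij
      simp only [hxlo, hxhi, hynew]
      by_cases h1 : (j : ℕ) < D
      · -- both on the left column, distinct heights
        simp only [if_pos h1, if_pos (show (i : ℕ) < D by omega)]
        apply hBar_disjoint_of_ne
        intro h
        have := HuMono.injective h
        omega
      · by_cases h2 : (j : ℕ) = D
        · -- j is the floor bar; i is on the left, strictly above
          simp only [if_pos (show (i : ℕ) < D by omega), if_neg h1, if_pos h2]
          apply hBar_disjoint_of_ne
          intro h
          have := HuB ((i : ℕ) + 1)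
          rw [h] at this
          exact lt_irrefl _ this
        · -- j is on the right column
          simp only [if_neg h1, if_neg h2]
          by_cases h3 : (i : ℕ) < D
          · simp only [if_pos h3]
            apply hBar_disjoint_of_x
            intro x hx
            have : x = cu := le_antisymm hx.2 hx.1
            rw [this]
            intro hmem
            exact hcucv (le_antisymm hmem.2 hmem.1)
          · by_cases h4 : (i : ℕ) = D
            · simp only [if_neg h3, if_pos h4]
              apply hBar_disjoint_of_ne
              intro h
              have := HvB (t - (j : ℕ))
              rw [← h] at this
              exact lt_irrefl _ this
            · simp only [if_neg h3, if_neg h4]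
              apply hBar_disjoint_of_ne
              intro h
              have := HvMono.injective h
              omega
    rcases lt_or_gt_of_ne (fun h : (i : ℕ) = (j : ℕ) => hij (Fin.ext h)) with h | h
    · exact key i j h
    · exact (key j i h).symm
  · -- B3 : new bars disjoint from old bars
    intro j z
    simp only [hxlo, hxhi, hynew]
    by_cases h1 : (j : ℕ) < D
    · simp only [if_pos h1]
      by_cases hc : cu ∈ Set.Icc (R.lo z) (R.hi z)
      · apply hBar_disjoint_of_ne
        intro h
        rcases lt_or_ge (R.yc z) (R.yc u) with hlt | hge
        · have hzB : R.yc z ∈ BuV := Finset.mem_image_of_mem _ ((hBu z).2 ⟨hc, hlt⟩)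
          exact HuNot ((j : ℕ)) (h ▸ hzB)
        · have h2 : Hu ((j : ℕ) + 1) < Hu 0 := HuMono (Nat.succ_pos _)
          rw [Hu0, h] at h2
          linarith
      · apply hBar_disjoint_of_x
        intro x hx
        have : x = cu := le_antisymm hx.2 hx.1
        rw [this]
        exact hc
    · by_cases h2 : (j : ℕ) = D
      · simp only [if_neg h1, if_pos h2]
        apply hBar_disjoint_of_ne
        intro h
        have := hyA z
        rw [← h] at this
        exact lt_irrefl _ this
      · simp only [if_neg h1, if_neg h2]
        by_cases hc : cv ∈ Set.Icc (R.lo z) (R.hi z)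
        · apply hBar_disjoint_of_ne
          intro h
          rcases lt_or_ge (R.yc z) (R.yc v) with hlt | hge
          · have hzB : R.yc z ∈ BwV := Finset.mem_image_of_mem _ ((hBw z).2 ⟨hc, hlt⟩)
            have h3 : t - (j : ℕ) = (t - 1 - (j : ℕ)) + 1 := by have := j.isLt; omega
            rw [h3] at h
            exact HvNot _ (h ▸ hzB)
          · have h3 : Hv (t - (j : ℕ)) < Hv 0 := HvMono (by have := j.isLt; omega)
            rw [Hv0, h] at h3
            linarith
        · apply hBar_disjoint_of_x
          intro x hx
          have : x = cv := le_antisymm hx.2 hx.1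
          rw [this]
          exact hc
  · -- B4 : sights on bars
    have hbar : ∀ p : Fin (t + 2), (p : ℕ) ≤ D + 1 →
        cu ∈ Set.Icc (Sum.elim R.lo xlo (pos u v t p)) (Sum.elim R.hi xhi (pos u v t p)) := by
      intro p hp
      by_cases h0 : (p : ℕ) = 0
      · rw [pos_head h0]
        exact ⟨le_of_lt hcu.1, le_of_lt hcu.2⟩
      · rw [pos_mid h0 (by omega)]
        show cu ∈ Set.Icc (xlo ⟨(p : ℕ) - 1, _⟩) (xhi ⟨(p : ℕ) - 1, _⟩)
        simp only [hxlo, hxhi]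
        by_cases h1 : (p : ℕ) - 1 < D
        · simp only [if_pos h1]
          exact ⟨le_refl cu, le_refl cu⟩
        · simp only [if_neg h1, if_pos (show (p : ℕ) - 1 = D by omega)]
          exact ⟨min_le_left _ _, le_max_left _ _⟩
    have hbar' : ∀ p : Fin (t + 2), D + 1 ≤ (p : ℕ) →
        cv ∈ Set.Icc (Sum.elim R.lo xlo (pos u v t p)) (Sum.elim R.hi xhi (pos u v t p)) := by
      intro p hp
      by_cases h0 : (p : ℕ) = t + 1
      · rw [pos_tail h0]
        exact ⟨le_of_lt hcv.1, le_of_lt hcv.2⟩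
      · rw [pos_mid (by omega) h0]
        show cv ∈ Set.Icc (xlo ⟨(p : ℕ) - 1, _⟩) (xhi ⟨(p : ℕ) - 1, _⟩)
        simp only [hxlo, hxhi]
        by_cases h1 : (p : ℕ) - 1 = D
        · simp only [if_neg (show ¬ (p : ℕ) - 1 < D by omega), if_pos h1]
          exact ⟨min_le_right _ _, le_max_right _ _⟩
        · simp only [if_neg (show ¬ (p : ℕ) - 1 < D by omega), if_neg h1]
          exact ⟨le_refl cv, le_refl cv⟩
    intro i
    have hc : (i.castSucc : ℕ) = (i : ℕ) := rfl
    have hs : (i.succ : ℕ) = (i : ℕ) + 1 := rfl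
    by_cases hside : (i : ℕ) ≤ D
    · have : cs i = cu := by simp only [hcs]; rw [if_pos hside]
      rw [this]
      exact ⟨hbar i.castSucc (by omega), hbar i.succ (by omega)⟩
    · have : cs i = cv := by simp only [hcs]; rw [if_neg hside]
      rw [this]
      exact ⟨hbar' i.castSucc (by omega), hbar' i.succ (by omega)⟩
  · -- B5 : chain edges see at most one other bar
    intro i
    have hi1 : (i : ℕ) ≤ t := by have := i.isLt; omega
    by_cases hside : (i : ℕ) ≤ D
    · -- left-hand side of the path, column cu, going down
      have hlt : totB ((i : ℕ) + 1) < totB (i : ℕ) := hstepL _ (by omega)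
      have hmin : min (Sum.elim R.yc ynew (pos u v t i.castSucc))
          (Sum.elim R.yc ynew (pos u v t i.succ)) = totB ((i : ℕ) + 1) := by
        rw [htot i.castSucc, htot i.succ]
        exact min_eq_right (le_of_lt hlt)
      have hmax : max (Sum.elim R.yc ynew (pos u v t i.castSucc))
          (Sum.elim R.yc ynew (pos u v t i.succ)) = totB (i : ℕ) := by
        rw [htot i.castSucc, htot i.succ]
        exact max_eq_left (le_of_lt hlt)
      have hcs' : cs i = cu := by simp only [hcs]; rw [if_pos hside]
      rw [hmin, hmax, hcs']
      have hnotinr : ∀ j : Fin t, cu ∈ Set.Icc (xlo j) (xhi j) →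
          ynew j ∉ Set.Ioo (totB ((i : ℕ) + 1)) (totB (i : ℕ)) := by
        intro j hxj hyj
        simp only [hynew] at hyj
        simp only [hxlo, hxhi] at hxj
        by_cases hj1 : (j : ℕ) < D
        · rw [if_pos hj1] at hyj
          have he : Hu ((j : ℕ) + 1) = totB ((j : ℕ) + 1) := by
            simp only [htotB]; rw [if_pos (by omega)]
          rw [he] at hyj
          have hgt : (i : ℕ) < (j : ℕ) + 1 := by
            by_contra hcon
            push_neg at hcon
            exact absurd (hanti _ _ hcon (by omega)) (not_le.2 hyj.2)
          have hlt2 : (j : ℕ) + 1 < (i : ℕ) + 1 := by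
            by_contra hcon
            push_neg at hcon
            exact absurd (hanti _ _ hcon (by omega)) (not_le.2 hyj.1)
          omega
        · by_cases hj2 : (j : ℕ) = D
          · rw [if_neg hj1, if_pos hj2] at hyj
            exact absurd (lt_of_le_of_lt (hyAle _ (by omega)) hyj.1) (lt_irrefl yA)
          · rw [if_neg hj1, if_neg hj2, if_neg hj1, if_neg hj2] at hxj
            exact hcucv (le_antisymm hxj.2 hxj.1)
      have htop : totB (i : ℕ) ≤ R.yc u := by
        have h := hanti 0 (i : ℕ) (Nat.zero_le _) (by omega)
        have h0 : totB 0 = R.yc u := by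
          simp only [htotB]; rw [if_pos (Nat.zero_le D), Hu0]
        rw [h0] at h
        exact h
      have key : ∀ b ∈ BuV, ∀ b' ∈ BuV, b ∈ Set.Ioo (totB ((i : ℕ) + 1)) (totB (i : ℕ)) →
          b' ∈ Set.Ioo (totB ((i : ℕ) + 1)) (totB (i : ℕ)) → b = b' := by
        intro b hb b' hb' hbI hbI'
        have hiD' : totB (i : ℕ) = Hu (i : ℕ) := by
          simp only [htotB]; rw [if_pos hside]
        rw [hiD'] at hbI hbI'
        by_cases hiD : (i : ℕ) < D
        · have h2 : totB ((i : ℕ) + 1) = Hu ((i : ℕ) + 1) := by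
            simp only [htotB]; rw [if_pos (by omega)]
          rw [h2] at hbI hbI'
          exact HuSub (i : ℕ) b hb b' hb' hbI hbI'
        · have h2 : totB ((i : ℕ) + 1) = yA := by
            simp only [htotB]; rw [if_neg (by omega), if_pos (by omega)]
          rw [h2] at hbI hbI'
          have hcard := HuCard (i : ℕ)
          have hone : (BuV.filter (fun c => c < Hu (i : ℕ))).card ≤ 1 := by omega
          exact Finset.card_le_one.1 hone b
            (Finset.mem_filter.2 ⟨hb, hbI.2⟩) b' (Finset.mem_filter.2 ⟨hb', hbI'.2⟩)
      intro z1 hz1 z2 hz2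
      obtain ⟨h11, h12, h13⟩ := hz1
      obtain ⟨h21, h22, h23⟩ := hz2
      rw [seg_inter_nonempty] at h13 h23
      rcases z1 with w1 | j
      swap
      · exact absurd h13.2 (hnotinr j h13.1)
      rcases z2 with w2 | j
      swap
      · exact absurd h23.2 (hnotinr j h23.1)
      · have m1 : R.yc w1 ∈ BuV := Finset.mem_image_of_mem _
          ((hBu w1).2 ⟨h13.1, lt_of_lt_of_le h13.2.2 htop⟩)
        have m2 : R.yc w2 ∈ BuV := Finset.mem_image_of_mem _
          ((hBu w2).2 ⟨h23.1, lt_of_lt_of_le h23.2.2 htop⟩)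
        exact congrArg Sum.inl (R.col_inj h13.1 h23.1 (key _ m1 _ m2 h13.2 h23.2))
    · -- right-hand side of the path, column cv, going up
      have hDlt : D + 1 ≤ (i : ℕ) := by omega
      have hlt : totB (i : ℕ) < totB ((i : ℕ) + 1) := hstepR _ (by omega) (by omega)
      have hmin : min (Sum.elim R.yc ynew (pos u v t i.castSucc))
          (Sum.elim R.yc ynew (pos u v t i.succ)) = totB (i : ℕ) := by
        rw [htot i.castSucc, htot i.succ]
        exact min_eq_left (le_of_lt hlt)
      have hmax : max (Sum.elim R.yc ynew (pos u v t i.castSucc))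
          (Sum.elim R.yc ynew (pos u v t i.succ)) = totB ((i : ℕ) + 1) := by
        rw [htot i.castSucc, htot i.succ]
        exact max_eq_right (le_of_lt hlt)
      have hcs' : cs i = cv := by simp only [hcs]; rw [if_neg hside]
      rw [hmin, hmax, hcs']
      have hnotinr : ∀ j : Fin t, cv ∈ Set.Icc (xlo j) (xhi j) →
          ynew j ∉ Set.Ioo (totB (i : ℕ)) (totB ((i : ℕ) + 1)) := by
        intro j hxj hyj
        simp only [hynew] at hyj
        simp only [hxlo, hxhi] at hxj
        by_cases hj1 : (j : ℕ) < D
        · rw [if_pos hj1, if_pos hj1] at hxj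
          exact hcucv (le_antisymm hxj.1 hxj.2)
        · by_cases hj2 : (j : ℕ) = D
          · rw [if_neg hj1, if_pos hj2] at hyj
            exact absurd (lt_of_le_of_lt (hyAle _ (by omega)) hyj.1) (lt_irrefl yA)
          · rw [if_neg hj1, if_neg hj2] at hyj
            have he : Hv (t - (j : ℕ)) = totB ((j : ℕ) + 1) := by
              simp only [htotB]
              rw [if_neg (by omega), if_neg (by omega)]
              congr 1
              have := j.isLt
              omega
            rw [he] at hyj
            have hgt : (i : ℕ) < (j : ℕ) + 1 := by
              by_contra hcon
              push_neg at hcon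
              exact absurd (hmono _ _ (by omega) hcon) (not_le.2 hyj.1)
            have hlt2 : (j : ℕ) + 1 < (i : ℕ) + 1 := by
              by_contra hcon
              push_neg at hcon
              exact absurd (hmono _ _ (by omega) hcon) (not_le.2 hyj.2)
            omega
      have htop : totB ((i : ℕ) + 1) ≤ R.yc v := by
        have h := hmono ((i : ℕ) + 1) (t + 1) (by omega) (by omega)
        have h0 : totB (t + 1) = R.yc v := by
          simp only [htotB]
          rw [if_neg (by omega), if_neg (by omega)]
          have he : t + 1 - (t + 1) = 0 := by omega
          rw [he, Hv0]
        rw [h0] at h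
        exact h
      have key : ∀ b ∈ BwV, ∀ b' ∈ BwV, b ∈ Set.Ioo (totB (i : ℕ)) (totB ((i : ℕ) + 1)) →
          b' ∈ Set.Ioo (totB (i : ℕ)) (totB ((i : ℕ) + 1)) → b = b' := by
        intro b hb b' hb' hbI hbI'
        have hiR : totB ((i : ℕ) + 1) = Hv (t - (i : ℕ)) := by
          simp only [htotB]
          rw [if_neg (by omega), if_neg (by omega)]
          congr 1
          omega
        rw [hiR] at hbI hbI'
        by_cases hiD : D + 1 < (i : ℕ)
        · have h2 : totB (i : ℕ) = Hv (t - (i : ℕ) + 1) := by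
            simp only [htotB]
            rw [if_neg (by omega), if_neg (by omega)]
            congr 1
            omega
          rw [h2] at hbI hbI'
          exact HvSub (t - (i : ℕ)) b hb b' hb' hbI hbI'
        · have hieq : (i : ℕ) = D + 1 := by omega
          have h2 : totB (i : ℕ) = yA := by
            simp only [htotB]
            rw [if_neg (by omega), if_pos hieq]
          rw [h2] at hbI hbI'
          have hcard := HvCard (t - (i : ℕ))
          have hone : (BwV.filter (fun c => c < Hv (t - (i : ℕ)))).card ≤ 1 := by omega
          exact Finset.card_le_one.1 hone b
            (Finset.mem_filter.2 ⟨hb, hbI.2⟩) b' (Finset.mem_filter.2 ⟨hb', hbI'.2⟩)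
      intro z1 hz1 z2 hz2
      obtain ⟨h11, h12, h13⟩ := hz1
      obtain ⟨h21, h22, h23⟩ := hz2
      rw [seg_inter_nonempty] at h13 h23
      rcases z1 with w1 | j
      swap
      · exact absurd h13.2 (hnotinr j h13.1)
      rcases z2 with w2 | j
      swap
      · exact absurd h23.2 (hnotinr j h23.1)
      · have m1 : R.yc w1 ∈ BwV := Finset.mem_image_of_mem _
          ((hBw w1).2 ⟨h13.1, lt_of_lt_of_le h13.2.2 htop⟩)
        have m2 : R.yc w2 ∈ BwV := Finset.mem_image_of_mem _
          ((hBw w2).2 ⟨h23.1, lt_of_lt_of_le h23.2.2 htop⟩)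
        exact congrArg Sum.inl (R.col_inj h13.1 h23.1 (key _ m1 _ m2 h13.2 h23.2))
  · -- B6 : new bars do not affect old edges
    intro a b hadj j hmem
    have h1 := hmem.1
    simp only [hxlo, hxhi] at h1
    by_cases hj1 : (j : ℕ) < D
    · rw [if_pos hj1, if_pos hj1] at h1
      exact hcuS s(a, b) (le_antisymm h1.2 h1.1)
    · by_cases hj2 : (j : ℕ) = D
      · have h2 := hmem.2
        simp only [hynew] at h2
        rw [if_neg hj1, if_pos hj2] at h2
        have h3 : min (R.yc a) (R.yc b) < yA := h2.1
        rcases min_cases (R.yc a) (R.yc b) with ⟨hm, _⟩ | ⟨hm, _⟩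
        · rw [hm] at h3; exact absurd h3 (not_lt.2 (le_of_lt (hyA a)))
        · rw [hm] at h3; exact absurd h3 (not_lt.2 (le_of_lt (hyA b)))
      · rw [if_neg hj1, if_neg hj2, if_neg hj1, if_neg hj2] at h1
        exact hcvS s(a, b) (le_antisymm h1.2 h1.1)

lemma caseT0 [Fintype V] (u v : V) (huv : u ≠ v) (hcard : Fintype.card V ≤ 2) :
    Nonempty (Bar1VisRep (pathAdd G u v 0 ∅)) := by
  classical
  have hall : ∀ z : V, z = u ∨ z = v := by
    intro z
    have h2 : ({u, v} : Finset V).card = 2 := by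
      rw [Finset.card_insert_of_notMem (by simpa using huv), Finset.card_singleton]
    have h3 : ({u, v} : Finset V) = Finset.univ :=
      Finset.eq_of_subset_of_card_le (Finset.subset_univ _)
        (by rw [Finset.card_univ, h2]; exact hcard)
    have h4 : z ∈ ({u, v} : Finset V) := h3 ▸ Finset.mem_univ z
    simpa using h4
  refine ⟨⟨fun _ => 0, fun _ => 1,
    Sum.elim (fun w => if w = u then 0 else 1) (fun i => i.elim0), fun _ => zero_le_one,
    ?_, fun _ => 0, ?_, ?_⟩⟩
  · rintro (a | i) (b | j) hne
    · apply hBar_disjoint_of_ne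
      show (if a = u then (0 : ℝ) else 1) ≠ (if b = u then (0 : ℝ) else 1)
      have hab : a ≠ b := fun h => hne (by rw [h])
      by_cases ha : a = u
      · rw [if_pos ha, if_neg (fun hb => hab (ha.trans hb.symm))]
        norm_num
      · by_cases hb : b = u
        · rw [if_neg ha, if_pos hb]
          norm_num
        · exfalso
          rcases hall a with h | h
          · exact ha h
          · rcases hall b with h' | h'
            · exact hb h'
            · exact hab (h.trans h'.symm)
    · exact j.elim0
    · exact i.elim0
    · exact i.elim0
  · intro x y _
    exact ⟨⟨le_refl 0, zero_le_one⟩, ⟨le_refl 0, zero_le_one⟩⟩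
  · intro x y hadj
    intro z1 hz1 z2 hz2
    exfalso
    obtain ⟨hz11, hz12, -⟩ := hz1
    have hxy : x ≠ y := hadj.ne
    match x, y, z1 with
    | Sum.inl a, Sum.inl b, Sum.inl w =>
      have hab : a ≠ b := fun h => hxy (by rw [h])
      rcases hall a with ha | ha <;> rcases hall b with hb | hb <;> rcases hall w with hw | hw <;>
        subst ha <;> subst hb <;> subst hw <;>
        first
          | exact hab rfl
          | exact hz11 rfl
          | exact hz12 rfl
    | Sum.inl a, Sum.inl b, Sum.inr i => exact i.elim0
    | Sum.inl a, Sum.inr i, _ => exact i.elim0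
    | Sum.inr i, _, _ => exact i.elim0

/-- choosing a column inside an open interval avoiding all sight lines -/
lemma pick_col [Fintype V] (R : Bar1VisRep G) {a b : ℝ} (hab : a < b) :
    ∃ c : ℝ, c ∈ Set.Ioo a b ∧ ∀ e : Sym2 V, R.sight e ≠ c := by
  have hfin : (Set.range R.sight).Finite := by
    have : Finite (Sym2 V) := Quot.finite _
    exact Set.finite_range _
  have hinf : (Set.Ioo a b \ Set.range R.sight).Infinite :=
    (Set.Ioo_infinite hab).diff hfin
  obtain ⟨c, hc⟩ := hinf.nonempty
  exact ⟨c, hc.1, fun e he => hc.2 ⟨e, he⟩⟩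


end Cases


/-- The class of (weak) bar 1-visibility graphs is closed under
path-addition (with empty supplementary edge set, the class being hereditary). -/
theorem bar1Visibility_closed_under_pathAddition
    {V : Type} [Fintype V] (G : SimpleGraph V) (hG : IsBar1VisibilityGraph G)
    (u v : V) (huv : u ≠ v)
    (t : ℕ) (ht : Fintype.card V - 1 ≤ t + 1) :
    IsBar1VisibilityGraph (pathAdd G u v t ∅) := by
  classical
  obtain ⟨R0⟩ := hG
  obtain ⟨R, hfat⟩ := R0.fatten
  by_cases ht0 : t = 0
  · subst ht0
    exact caseT0 u v huv (by omega)
  · have ht1 : 1 ≤ t := by omega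
    have htn : Fintype.card V ≤ t + 2 := by omega
    by_cases hover : max (R.lo u) (R.lo v) < min (R.hi u) (R.hi v)
    · -- the bars of u and v overlap : a single column suffices
      obtain ⟨c, hcI, hcS⟩ := pick_col R hover
      have hcu : c ∈ Set.Ioo (R.lo u) (R.hi u) :=
        ⟨lt_of_le_of_lt (le_max_left _ _) hcI.1, lt_of_lt_of_le hcI.2 (min_le_left _ _)⟩
      have hcv : c ∈ Set.Ioo (R.lo v) (R.hi v) :=
        ⟨lt_of_le_of_lt (le_max_right _ _) hcI.1, lt_of_lt_of_le hcI.2 (min_le_right _ _)⟩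
      rcases lt_trichotomy (R.yc v) (R.yc u) with hlt | heq | hgt
      · exact caseA R u v huv t htn c hcu hcv hcS hlt
      · exact absurd heq (hBar_disjoint_iff.1 (R.bars_disjoint v u huv.symm) c
          (Set.Ioo_subset_Icc_self hcv) (Set.Ioo_subset_Icc_self hcu))
      · exact caseA R.flip u v huv t htn c hcu hcv hcS (neg_lt_neg hgt)
    · -- disjoint bars : go through the floor, in the cheaper direction
      obtain ⟨cu, hcuI, hcuS⟩ := pick_col R (hfat u)
      obtain ⟨cv, hcvI, hcvS⟩ := pick_col R (hfat v)
      have hcu_v : cu ∉ Set.Icc (R.lo v) (R.hi v) := by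
        intro hmem
        exact hover (max_lt (lt_min (hfat u) (lt_of_lt_of_le hcuI.1 hmem.2))
          (lt_min (lt_of_le_of_lt hmem.1 hcuI.2) (hfat v)))
      have hcv_u : cv ∉ Set.Icc (R.lo u) (R.hi u) := by
        intro hmem
        exact hover (max_lt (lt_min (hfat u) (lt_of_le_of_lt hmem.1 hcvI.2))
          (lt_min (lt_of_lt_of_le hcvI.1 hmem.2) (hfat v)))
      set Bu : Finset V := Finset.univ.filter
        (fun z => cu ∈ Set.Icc (R.lo z) (R.hi z) ∧ R.yc z < R.yc u) with hBu
      set Au : Finset V := Finset.univ.filter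
        (fun z => cu ∈ Set.Icc (R.lo z) (R.hi z) ∧ R.yc u < R.yc z) with hAu
      set Bw : Finset V := Finset.univ.filter
        (fun z => cv ∈ Set.Icc (R.lo z) (R.hi z) ∧ R.yc z < R.yc v) with hBw
      set Aw : Finset V := Finset.univ.filter
        (fun z => cv ∈ Set.Icc (R.lo z) (R.hi z) ∧ R.yc v < R.yc z) with hAw
      have hcount : ∀ (c0 : ℝ) (w : V), c0 ∉ Set.Icc (R.lo w) (R.hi w) →
          ∀ w' : V, w ≠ w' →
          (Finset.univ.filter (fun z => c0 ∈ Set.Icc (R.lo z) (R.hi z) ∧ R.yc z < R.yc w')).card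
          + (Finset.univ.filter
              (fun z => c0 ∈ Set.Icc (R.lo z) (R.hi z) ∧ R.yc w' < R.yc z)).card
          ≤ Fintype.card V - 2 := by
        intro c0 w hc0 w' hww'
        have hdisj : Disjoint
            (Finset.univ.filter (fun z => c0 ∈ Set.Icc (R.lo z) (R.hi z) ∧ R.yc z < R.yc w'))
            (Finset.univ.filter (fun z => c0 ∈ Set.Icc (R.lo z) (R.hi z) ∧ R.yc w' < R.yc z)) := by
          rw [Finset.disjoint_left]
          intro z hz1 hz2
          exact lt_asymm (Finset.mem_filter.1 hz1).2.2 (Finset.mem_filter.1 hz2).2.2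
        have hsub : (Finset.univ.filter
              (fun z => c0 ∈ Set.Icc (R.lo z) (R.hi z) ∧ R.yc z < R.yc w')) ∪
            (Finset.univ.filter
              (fun z => c0 ∈ Set.Icc (R.lo z) (R.hi z) ∧ R.yc w' < R.yc z)) ⊆
            (Finset.univ.erase w).erase w' := by
          intro z hz
          have hprop : c0 ∈ Set.Icc (R.lo z) (R.hi z) ∧ R.yc z ≠ R.yc w' := by
            rcases Finset.mem_union.1 hz with h | h
            · exact ⟨(Finset.mem_filter.1 h).2.1, ne_of_lt (Finset.mem_filter.1 h).2.2⟩
            · exact ⟨(Finset.mem_filter.1 h).2.1, (ne_of_lt (Finset.mem_filter.1 h).2.2).symm⟩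
          refine Finset.mem_erase.2 ⟨fun h => hprop.2 (by rw [h]),
            Finset.mem_erase.2 ⟨fun h => hc0 (h ▸ hprop.1), Finset.mem_univ z⟩⟩
        have hcard2 : ((Finset.univ.erase w).erase w').card = Fintype.card V - 2 := by
          rw [Finset.card_erase_of_mem (Finset.mem_erase.2 ⟨hww'.symm, Finset.mem_univ w'⟩),
            Finset.card_erase_of_mem (Finset.mem_univ w), Finset.card_univ]
          omega
        calc _ = ((Finset.univ.filter _) ∪ (Finset.univ.filter _)).card :=
              (Finset.card_union_of_disjoint hdisj).symm
          _ ≤ ((Finset.univ.erase w).erase w').card := Finset.card_le_card hsub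
          _ = Fintype.card V - 2 := hcard2
      have hsum_u : Bu.card + Au.card ≤ Fintype.card V - 2 := hcount cu v hcu_v u huv.symm
      have hsum_v : Bw.card + Aw.card ≤ Fintype.card V - 2 := hcount cv u hcv_u v huv
      have hchoice : (Bu.card - 1 + (Bw.card - 1) ≤ t - 1) ∨
          (Au.card - 1 + (Aw.card - 1) ≤ t - 1) := by omega
      rcases hchoice with hr | hr
      · refine caseB R u v huv t ht1 cu cv hcuI hcvI hcuS hcvS hcu_v hcv_u Bu Bw ?_ ?_ hr
        · intro z
          rw [hBu, Finset.mem_filter]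
          exact ⟨fun h => h.2, fun h => ⟨Finset.mem_univ z, h⟩⟩
        · intro z
          rw [hBw, Finset.mem_filter]
          exact ⟨fun h => h.2, fun h => ⟨Finset.mem_univ z, h⟩⟩
      · refine caseB R.flip u v huv t ht1 cu cv hcuI hcvI hcuS hcvS hcu_v hcv_u Au Aw ?_ ?_ hr
        · intro z
          rw [hAu, Finset.mem_filter]
          constructor
          · intro h
            exact ⟨h.2.1, neg_lt_neg h.2.2⟩
          · rintro ⟨h1, h2⟩
            exact ⟨Finset.mem_univ z, h1, neg_lt_neg_iff.1 h2⟩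
        · intro z
          rw [hAw, Finset.mem_filter]
          constructor
          · intro h
            exact ⟨h.2.1, neg_lt_neg h.2.2⟩
          · rintro ⟨h1, h2⟩
            exact ⟨Finset.mem_univ z, h1, neg_lt_neg_iff.1 h2⟩
end

section
/- The class of (weak) aligned bar 1-visibility (AB1V) graphs is closed under path-addition: if a finite simple graph G admits an aligned bar 1-visibility representation, u and v are distinct vertices of G, and P is a path of length at least |V(G)|−1 from u to v whose internal vertices are new, then G ⊕ P ⊕ ∅ admits an aligned bar 1-visibility representation. -/
/-- The vertical bar at x-coordinate `x` reaching from the x-axis up to height `h`. -/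
def vBar (x h : ℝ) : Set Plane := ({x} : Set ℝ) ×ˢ Set.Icc 0 h

/-- A (weak) aligned bar 1-visibility representation of `G`: each vertex gets a vertical
closed bar whose bottom endpoint lies on the x-axis, the bars having pairwise distinct
x-coordinates, and each edge `xy` a horizontal line of sight with one endpoint on the bar
of `x` and the other on the bar of `y` whose interior intersects the bars of at most one
vertex other than `x` and `y`. -/
structure AlignedBar1VisRep {V : Type*} (G : SimpleGraph V) where
  /-- the x-coordinate of the bar of each vertex -/
  xc : V → ℝ
  /-- the height of the bar of each vertex -/
  ht : V → ℝ
  ht_nonneg : ∀ x : V, 0 ≤ ht x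
  xc_inj : Function.Injective xc
  /-- the y-coordinate of the horizontal line of sight chosen for each edge -/
  sight : Sym2 V → ℝ
  sight_on_bars : ∀ x y : V, G.Adj x y →
    sight s(x, y) ∈ Set.Icc 0 (ht x) ∧ sight s(x, y) ∈ Set.Icc 0 (ht y)
  sight_one_bar : ∀ x y : V, G.Adj x y →
    {z : V | z ≠ x ∧ z ≠ y ∧
      ((Set.Ioo (min (xc x) (xc y)) (max (xc x) (xc y)) ×ˢ ({sight s(x, y)} : Set ℝ)) ∩
        vBar (xc z) (ht z)).Nonempty}.Subsingleton

/-- A graph is a (weak) aligned bar 1-visibility (AB1V) graph if it admits an aligned bar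
1-visibility representation. -/
def IsAlignedBar1VisibilityGraph {V : Type*} (G : SimpleGraph V) : Prop :=
  Nonempty (AlignedBar1VisRep G)

section Helpers

lemma vbar_inter_nonempty {lo hi σ xz hz : ℝ} :
    ((Set.Ioo lo hi ×ˢ ({σ} : Set ℝ)) ∩ vBar xz hz).Nonempty ↔
      (xz ∈ Set.Ioo lo hi ∧ σ ∈ Set.Icc 0 hz) := by
  constructor
  · rintro ⟨p, hp⟩
    simp only [vBar, Set.mem_inter_iff, Set.mem_prod, Set.mem_singleton_iff] at hp
    obtain ⟨⟨h1, h2⟩, h3, h4⟩ := hp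
    exact ⟨h3 ▸ h1, h2 ▸ h4⟩
  · rintro ⟨h1, h2⟩
    exact ⟨(xz, σ), ⟨h1, rfl⟩, ⟨rfl, h2⟩⟩

lemma mem_Ioo_minmax {z p q : ℝ} :
    z ∈ Set.Ioo (min p q) (max p q) ↔ (z - p) * (z - q) < 0 := by
  simp only [Set.mem_Ioo]
  constructor
  · rintro ⟨h1, h2⟩
    rcases le_total p q with h | h
    · rw [min_eq_left h] at h1; rw [max_eq_right h] at h2; nlinarith
    · rw [min_eq_right h] at h1; rw [max_eq_left h] at h2; nlinarith
  · intro h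
    rcases le_total p q with hpq | hpq
    · rw [min_eq_left hpq, max_eq_right hpq]
      constructor <;> nlinarith
    · rw [min_eq_right hpq, max_eq_left hpq]
      constructor <;> nlinarith

lemma betw_lt {p q r : ℝ} (hpq : p < q) (h : (r - p) * (r - q) < 0) : p < r ∧ r < q := by
  constructor <;> nlinarith

open Classical in
noncomputable def rnk {V : Type} [Fintype V] {G : SimpleGraph V}
    (R : AlignedBar1VisRep G) (z : V) : ℕ :=
  (Finset.univ.filter (fun z' => R.xc z' < R.xc z)).card

lemma rnk_lt_of_lt {V : Type} [Fintype V] {G : SimpleGraph V}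
    (R : AlignedBar1VisRep G) {z1 z2 : V} (h : R.xc z1 < R.xc z2) :
    rnk R z1 < rnk R z2 := by
  unfold rnk
  apply Finset.card_lt_card
  have hsub : (Finset.univ.filter (fun z' => R.xc z' < R.xc z1)) ⊆
      (Finset.univ.filter (fun z' => R.xc z' < R.xc z2)) := by
    intro w hw
    rw [Finset.mem_filter] at hw ⊢
    exact ⟨hw.1, hw.2.trans h⟩
  rw [Finset.ssubset_iff_of_subset hsub]
  exact ⟨z1, Finset.mem_filter.mpr ⟨Finset.mem_univ _, h⟩,
    fun hc => lt_irrefl _ (Finset.mem_filter.mp hc).2⟩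

lemma rnk_lt_iff {V : Type} [Fintype V] {G : SimpleGraph V}
    (R : AlignedBar1VisRep G) {z1 z2 : V} :
    rnk R z1 < rnk R z2 ↔ R.xc z1 < R.xc z2 := by
  constructor
  · intro h
    by_contra hc
    push_neg at hc
    rcases eq_or_lt_of_le hc with he | hl
    · have : z2 = z1 := R.xc_inj he
      rw [this] at h
      exact lt_irrefl _ h
    · have := rnk_lt_of_lt R hl
      omega
  · exact rnk_lt_of_lt R

lemma rnk_inj {V : Type} [Fintype V] {G : SimpleGraph V}
    (R : AlignedBar1VisRep G) {z1 z2 : V} (h : rnk R z1 = rnk R z2) : z1 = z2 := by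
  rcases lt_trichotomy (R.xc z1) (R.xc z2) with hl | he | hl
  · exact absurd (rnk_lt_of_lt R hl) (by omega)
  · exact R.xc_inj he
  · exact absurd (rnk_lt_of_lt R hl) (by omega)

lemma rnk_lt_card {V : Type} [Fintype V] {G : SimpleGraph V}
    (R : AlignedBar1VisRep G) (z : V) : rnk R z < Fintype.card V := by
  classical
  unfold rnk
  have h1 : (Finset.univ.filter (fun z' => R.xc z' < R.xc z)) ⊆ Finset.univ.erase z := by
    intro w hw
    rw [Finset.mem_filter] at hw
    rw [Finset.mem_erase]
    exact ⟨fun he => absurd hw.2 (by rw [he]; exact lt_irrefl _), Finset.mem_univ _⟩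
  calc (Finset.univ.filter (fun z' => R.xc z' < R.xc z)).card
      ≤ (Finset.univ.erase z).card := Finset.card_le_card h1
    _ < Finset.univ.card := Finset.card_erase_lt_of_mem (Finset.mem_univ z)
    _ = Fintype.card V := Finset.card_univ

lemma rnk_betw {V : Type} [Fintype V] {G : SimpleGraph V}
    (R : AlignedBar1VisRep G) (p q w : V)
    (h : (((rnk R w : ℕ) : ℝ) - ((rnk R p : ℕ) : ℝ)) * (((rnk R w : ℕ) : ℝ) - ((rnk R q : ℕ) : ℝ)) < 0) :
    (R.xc w - R.xc p) * (R.xc w - R.xc q) < 0 := by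
  rw [mul_neg_iff] at h ⊢
  rcases h with ⟨h1, h2⟩ | ⟨h1, h2⟩
  · left
    rw [sub_pos] at h1 ⊢
    rw [sub_neg] at h2 ⊢
    exact ⟨(rnk_lt_iff R).mp (by exact_mod_cast h1), (rnk_lt_iff R).mp (by exact_mod_cast h2)⟩
  · right
    rw [sub_neg] at h1 ⊢
    rw [sub_pos] at h2 ⊢
    exact ⟨(rnk_lt_iff R).mp (by exact_mod_cast h1), (rnk_lt_iff R).mp (by exact_mod_cast h2)⟩

noncomputable def sgn (a b : ℕ) : ℝ := if a < b then 1 else -1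

lemma sgn_sq (a b : ℕ) : sgn a b * sgn a b = 1 := by unfold sgn; split <;> norm_num

lemma sgn_cancel (a b : ℕ) {x y : ℝ} (h : sgn a b * x = sgn a b * y) : x = y := by
  unfold sgn at h; split at h <;> linarith

lemma sgn_int (a b k : ℕ) : ∃ c : ℤ, (c : ℝ) = sgn a b * ((k : ℝ) - (a : ℝ)) := by
  unfold sgn; split
  · exact ⟨(k : ℤ) - (a : ℤ), by push_cast; ring⟩
  · exact ⟨(a : ℤ) - (k : ℤ), by push_cast; ring⟩

noncomputable def offf (m t j : ℕ) : ℝ :=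
  ((min j m : ℕ) : ℝ) - 1/2 + (j : ℝ) * (4 * ((t : ℝ) + 2))⁻¹

lemma eps_pos (t : ℕ) : (0:ℝ) < (4 * ((t : ℝ) + 2))⁻¹ := by positivity

lemma eps_le (t : ℕ) {j : ℕ} (hj : j ≤ t + 1) : (j : ℝ) * (4 * ((t : ℝ) + 2))⁻¹ ≤ 1/4 := by
  have h1 : (j : ℝ) ≤ (t : ℝ) + 1 := by exact_mod_cast hj
  have h2 : (0:ℝ) < 4 * ((t : ℝ) + 2) := by positivity
  have h3 : (j : ℝ) * (4 * ((t : ℝ) + 2))⁻¹ = (j : ℝ) / (4 * ((t : ℝ) + 2)) :=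
    (div_eq_mul_inv _ _).symm
  rw [h3, div_le_div_iff₀ h2 (by norm_num : (0:ℝ) < 4)]
  linarith

lemma offf_strict (m t : ℕ) {j k : ℕ} (h : j < k) : offf m t j < offf m t k := by
  unfold offf
  have h1 : ((min j m : ℕ) : ℝ) ≤ ((min k m : ℕ) : ℝ) := by
    exact_mod_cast (show min j m ≤ min k m by omega)
  have h2 : (j : ℝ) < (k : ℝ) := by exact_mod_cast h
  have h3 := eps_pos t
  nlinarith

lemma offf_mono (m t : ℕ) {j k : ℕ} (h : j ≤ k) : offf m t j ≤ offf m t k := by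
  rcases Nat.lt_or_ge j k with h' | h'
  · exact le_of_lt (offf_strict m t h')
  · have : j = k := by omega
    rw [this]

lemma offf_lb (m t j : ℕ) : ((min j m : ℕ) : ℝ) - 1/2 ≤ offf m t j := by
  unfold offf
  have h1 : (0:ℝ) ≤ (j : ℝ) * (4 * ((t : ℝ) + 2))⁻¹ := by positivity
  linarith

lemma offf_ub (m t : ℕ) {j : ℕ} (hj : j ≤ t + 1) :
    offf m t j ≤ ((min j m : ℕ) : ℝ) - 1/4 := by
  unfold offf
  linarith [eps_le t hj]

lemma offf_not_int (m t : ℕ) {j : ℕ} (hj : j ≤ t + 1) (c : ℤ) : (c : ℝ) ≠ offf m t j := by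
  intro h
  have h1 := offf_lb m t j
  have h2 := offf_ub m t hj
  have k1 : ((min j m : ℕ) : ℝ) - 1 < (c : ℝ) := by linarith [h ▸ h1]
  have k2 : (c : ℝ) < ((min j m : ℕ) : ℝ) := by
    rw [h]; linarith
  have k1' : ((min j m : ℕ) : ℤ) - 1 < c := by exact_mod_cast k1
  have k2' : c < ((min j m : ℕ) : ℤ) := by exact_mod_cast k2
  omega

noncomputable def fS {V : Type} {G : SimpleGraph V} {t : ℕ} (R : AlignedBar1VisRep G) :
    V ⊕ Fin t → V ⊕ Fin t → ℝ
  | Sum.inl p, Sum.inl q => R.sight s(p, q) + 1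
  | _, _ => 0

lemma fS_comm {V : Type} {G : SimpleGraph V} {t : ℕ} (R : AlignedBar1VisRep G) :
    ∀ x y : V ⊕ Fin t, fS R x y = fS R y x := by
  rintro (p | p) (q | q)
  · show R.sight s(p, q) + 1 = R.sight s(q, p) + 1
    rw [Sym2.eq_swap]
  · rfl
  · rfl
  · rfl

def chainL {V : Type} (u : V) (t : ℕ) (i : Fin (t + 1)) : V ⊕ Fin t :=
  if _h : (i : ℕ) = 0 then Sum.inl u else Sum.inr ⟨(i : ℕ) - 1, by have := i.isLt; omega⟩

def chainR {V : Type} (v : V) (t : ℕ) (i : Fin (t + 1)) : V ⊕ Fin t :=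
  if _h : (i : ℕ) = t then Sum.inl v else
    Sum.inr ⟨(i : ℕ), by have := i.isLt; omega⟩

lemma chain_castSucc {V : Type} (u v : V) (t : ℕ) (i : Fin (t + 1)) :
    chainVertex (Sum.inl u) (Sum.inl v) (fun j : Fin t => (Sum.inr j : V ⊕ Fin t)) i.castSucc
      = chainL u t i := by
  have hi := i.isLt
  unfold chainVertex chainL
  simp only [Fin.coe_castSucc]
  by_cases h0 : (i : ℕ) = 0
  · rw [dif_pos h0, dif_pos h0]
  · rw [dif_neg h0, dif_neg (show ¬ (i : ℕ) = t + 1 by omega), dif_neg h0]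

lemma chain_succ {V : Type} (u v : V) (t : ℕ) (i : Fin (t + 1)) :
    chainVertex (Sum.inl u) (Sum.inl v) (fun j : Fin t => (Sum.inr j : V ⊕ Fin t)) i.succ
      = chainR v t i := by
  have hi := i.isLt
  unfold chainVertex chainR
  simp only [Fin.val_succ]
  by_cases hT : (i : ℕ) = t
  · rw [dif_neg (show ¬ (i : ℕ) + 1 = 0 by omega),
      dif_pos (show (i : ℕ) + 1 = t + 1 by omega), dif_pos hT]
  · rw [dif_neg (show ¬ (i : ℕ) + 1 = 0 by omega),
      dif_neg (show ¬ (i : ℕ) + 1 = t + 1 by omega), dif_neg hT]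
    exact congrArg Sum.inr (Fin.ext (by simp))

end Helpers

/-- The class of (weak) aligned bar 1-visibility graphs is closed under
path-addition (with empty supplementary edge set, the class being hereditary). -/
theorem alignedBar1Visibility_closed_under_pathAddition
    {V : Type} [Fintype V] (G : SimpleGraph V) (hG : IsAlignedBar1VisibilityGraph G)
    (u v : V) (huv : u ≠ v)
    (t : ℕ) (ht : Fintype.card V - 1 ≤ t + 1) :
    IsAlignedBar1VisibilityGraph (pathAdd G u v t ∅) := by
  classical
  obtain ⟨R⟩ := hG
  rcases Nat.eq_zero_or_pos t with rfl | htpos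
  · -- trivial case t = 0 : |V| ≤ 2, all sights at height 0
    have hcard : Fintype.card V ≤ 2 := by
      have hpos : 0 < Fintype.card V := Fintype.card_pos_iff.mpr ⟨u⟩
      omega
    have hnn : ∀ w : V ⊕ Fin 0, 0 ≤ Sum.elim R.ht (fun i : Fin 0 => i.elim0) w := by
      rintro (z | i)
      · exact R.ht_nonneg z
      · exact i.elim0
    refine ⟨⟨Sum.elim R.xc (fun i : Fin 0 => i.elim0),
      Sum.elim R.ht (fun i : Fin 0 => i.elim0), hnn, ?_, fun _ => 0, ?_, ?_⟩⟩
    · rintro (z1 | i) (z2 | i2) h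
      · exact congrArg Sum.inl (R.xc_inj h)
      · exact i2.elim0
      · exact i.elim0
      · exact i.elim0
    · intro x y _
      exact ⟨⟨le_refl 0, hnn x⟩, ⟨le_refl 0, hnn y⟩⟩
    · rintro (x' | i) (y' | j) hxy z1 hz1 z2 hz2
      · exfalso
        simp only [Set.mem_setOf_eq] at hz1
        obtain ⟨hne1, hne2, _⟩ := hz1
        rcases z1 with w | i
        · have hw1 : w ≠ x' := fun h => hne1 (congrArg Sum.inl h)
          have hw2 : w ≠ y' := fun h => hne2 (congrArg Sum.inl h)
          have hxny : x' ≠ y' := fun h => hxy.ne (congrArg Sum.inl h)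
          have h3 : ({w, x', y'} : Finset V).card = 3 := by
            rw [Finset.card_insert_of_notMem (by simp [hw1, hw2]),
              Finset.card_insert_of_notMem (by simp [hxny]), Finset.card_singleton]
          have h4 := Finset.card_le_univ ({w, x', y'} : Finset V)
          omega
        · exact i.elim0
      · exact j.elim0
      · exact i.elim0
      · exact i.elim0
  · -- main case : t ≥ 1
    set a := rnk R u with ha
    set b := rnk R v with hb
    set m := max a b - min a b with hmdef
    set s := sgn a b with hsdef
    have hab : a ≠ b := fun h => huv (rnk_inj R h)
    have hm1 : 1 ≤ m := by omega
    have hmt : m ≤ t + 1 := by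
      have h1 := rnk_lt_card R u
      have h2 := rnk_lt_card R v
      omega
    have hs2 : s * s = 1 := sgn_sq a b
    have hsba : s * ((b : ℝ) - (a : ℝ)) = (m : ℝ) := by
      rw [hsdef]; unfold sgn
      split
      · rename_i hlt
        have hmeq : m = b - a := by omega
        rw [hmeq, Nat.cast_sub (le_of_lt hlt)]
        ring
      · rename_i hlt
        have hba : b < a := by omega
        have hmeq : m = a - b := by omega
        rw [hmeq, Nat.cast_sub (le_of_lt hba)]
        ring
    set X : V ⊕ Fin t → ℝ := Sum.elim (fun z => ((rnk R z : ℕ) : ℝ))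
      (fun i => (a : ℝ) + s * offf m t ((i : ℕ) + 1)) with hX
    set H : V ⊕ Fin t → ℝ := Sum.elim (fun z => R.ht z + 1) (fun _ => 0) with hH
    set S : Sym2 (V ⊕ Fin t) → ℝ := Sym2.lift ⟨fS R, fS_comm R⟩ with hSdef
    have hXinl : ∀ z : V, X (Sum.inl z) = ((rnk R z : ℕ) : ℝ) := fun z => rfl
    have hXinr : ∀ i : Fin t, X (Sum.inr i) = (a : ℝ) + s * offf m t ((i : ℕ) + 1) :=
      fun i => rfl
    have hHinl : ∀ z : V, H (Sum.inl z) = R.ht z + 1 := fun z => rfl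
    have hHinr : ∀ i : Fin t, H (Sum.inr i) = 0 := fun i => rfl
    have hSll : ∀ p q : V, S s(Sum.inl p, Sum.inl q) = R.sight s(p, q) + 1 :=
      fun p q => Sym2.lift_mk _ _ _
    have hHnn : ∀ w, 0 ≤ H w := by
      rintro (z | i)
      · rw [hHinl]; linarith [R.ht_nonneg z]
      · rw [hHinr]
    -- injectivity of X
    have hXinj : Function.Injective X := by
      have noint : ∀ (c : ℤ) (j : Fin t), ((c : ℤ) : ℝ) ≠ (a : ℝ) + s * offf m t ((j : ℕ) + 1) := by
        intro c j hcontra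
        obtain ⟨c', hc'⟩ := sgn_int a b a
        have hc0 : s * ((a : ℝ) - (a : ℝ)) = 0 := by ring_nf
        -- directly: c = a + s * f  ⟹  s*(c - a) = f is an integer times s ... simpler:
        -- s * (c - a) = s * s * f = f, and s*(c-a) is ±(c-a), an integer
        have hint : ∃ d : ℤ, ((d : ℤ) : ℝ) = s * ((c : ℝ) - (a : ℝ)) := by
          rw [hsdef]; unfold sgn; split
          · exact ⟨c - (a : ℤ), by push_cast; ring⟩
          · exact ⟨(a : ℤ) - c, by push_cast; ring⟩
        obtain ⟨d, hd⟩ := hint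
        have : ((d : ℤ) : ℝ) = offf m t ((j : ℕ) + 1) := by
          rw [hd]
          linear_combination (offf m t ((j : ℕ) + 1)) * hs2 + s * hcontra
        exact offf_not_int m t (show (j : ℕ) + 1 ≤ t + 1 by have := j.isLt; omega) d this
      rintro (z1 | i1) (z2 | i2) h
      · rw [hXinl, hXinl] at h
        exact congrArg Sum.inl (rnk_inj R (by exact_mod_cast h))
      · rw [hXinl, hXinr] at h
        exact absurd ((by exact_mod_cast h : ((rnk R z1 : ℤ) : ℝ) = _)) (noint _ i2)
      · rw [hXinr, hXinl] at h
        exact absurd ((by exact_mod_cast h.symm : ((rnk R z2 : ℤ) : ℝ) = _)) (noint _ i1)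
      · rw [hXinr, hXinr] at h
        have h2 : offf m t ((i1 : ℕ) + 1) = offf m t ((i2 : ℕ) + 1) :=
          sgn_cancel a b (by linarith)
        have h3 : (i1 : ℕ) = (i2 : ℕ) := by
          by_contra hne
          rcases Nat.lt_or_ge (i1 : ℕ) (i2 : ℕ) with hlt | hge
          · exact absurd h2 (ne_of_lt (offf_strict m t (by omega)))
          · exact absurd h2.symm (ne_of_lt (offf_strict m t (by omega)))
        exact congrArg Sum.inr (Fin.ext h3)
    -- adjacency classification
    have adj_cases : ∀ {x y : V ⊕ Fin t}, (pathAdd G u v t ∅).Adj x y →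
        (∃ p q : V, G.Adj p q ∧ x = Sum.inl p ∧ y = Sum.inl q) ∨
        (∃ i : Fin (t + 1), (x = chainL u t i ∧ y = chainR v t i) ∨
          (x = chainR v t i ∧ y = chainL u t i)) := by
      intro x y hxy
      rw [pathAdd, SimpleGraph.fromEdgeSet_adj] at hxy
      obtain ⟨hmem, _⟩ := hxy
      rw [Set.union_empty, Set.mem_union] at hmem
      rcases hmem with hm' | hm'
      · obtain ⟨e, he, hemap⟩ := hm'
        left
        revert he hemap
        refine Sym2.ind (fun p q => ?_) e
        intro he hemap
        rw [Sym2.map_pair_eq, Sym2.eq_iff] at hemap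
        rw [SimpleGraph.mem_edgeSet] at he
        rcases hemap with ⟨h1, h2⟩ | ⟨h1, h2⟩
        · exact ⟨p, q, he, h1.symm, h2.symm⟩
        · exact ⟨q, p, he.symm, h2.symm, h1.symm⟩
      · obtain ⟨i, hi⟩ := hm'
        rw [chain_castSucc, chain_succ, Sym2.eq_iff] at hi
        right
        exact ⟨i, hi⟩
    -- sight value on chain edges is 0
    have hS_chain : ∀ i : Fin (t + 1), S s(chainL u t i, chainR v t i) = 0 := by
      intro i
      unfold chainL chainR
      by_cases h0 : (i : ℕ) = 0
      · rw [dif_pos h0, dif_neg (show ¬ (i : ℕ) = t by omega)]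
        exact Sym2.lift_mk _ _ _
      · rw [dif_neg h0]
        by_cases hT : (i : ℕ) = t
        · rw [dif_pos hT]
          exact Sym2.lift_mk _ _ _
        · rw [dif_neg hT]
          exact Sym2.lift_mk _ _ _
    refine ⟨⟨X, H, hHnn, hXinj, S, ?_, ?_⟩⟩
    · -- sight_on_bars
      intro x y hxy
      rcases adj_cases hxy with ⟨p, q, hpq, rfl, rfl⟩ | ⟨i, hc⟩
      · rw [hSll, hHinl, hHinl]
        obtain ⟨hsx, hsy⟩ := R.sight_on_bars p q hpq
        rw [Set.mem_Icc] at hsx hsy ⊢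
        exact ⟨⟨by linarith [hsx.1], by linarith [hsx.2]⟩,
          ⟨by linarith [hsy.1], by linarith [hsy.2]⟩⟩
      · have hS0 : S s(x, y) = 0 := by
          rcases hc with ⟨rfl, rfl⟩ | ⟨rfl, rfl⟩
          · exact hS_chain i
          · rw [Sym2.eq_swap]; exact hS_chain i
        rw [hS0]
        exact ⟨⟨le_refl 0, hHnn x⟩, ⟨le_refl 0, hHnn y⟩⟩
    · -- sight_one_bar
      intro x y hxy z1 hz1 z2 hz2
      simp only [Set.mem_setOf_eq] at hz1 hz2
      obtain ⟨hz1x, hz1y, hblk1⟩ := hz1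
      obtain ⟨hz2x, hz2y, hblk2⟩ := hz2
      rw [vbar_inter_nonempty] at hblk1 hblk2
      obtain ⟨hio1, hicc1⟩ := hblk1
      obtain ⟨hio2, hicc2⟩ := hblk2
      rw [mem_Ioo_minmax] at hio1 hio2
      rcases adj_cases hxy with ⟨p, q, hpq, rfl, rfl⟩ | ⟨i, hc⟩
      · -- old graph edge
        obtain ⟨hsx, hsy⟩ := R.sight_on_bars p q hpq
        rw [Set.mem_Icc] at hsx hsy
        have key : ∀ z : V ⊕ Fin t, z ≠ Sum.inl p → z ≠ Sum.inl q →
            (X z - X (Sum.inl p)) * (X z - X (Sum.inl q)) < 0 →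
            S s(Sum.inl p, Sum.inl q) ∈ Set.Icc 0 (H z) →
            ∃ w : V, z = Sum.inl w ∧ w ∈ {w : V | w ≠ p ∧ w ≠ q ∧
              ((Set.Ioo (min (R.xc p) (R.xc q)) (max (R.xc p) (R.xc q)) ×ˢ
                ({R.sight s(p, q)} : Set ℝ)) ∩ vBar (R.xc w) (R.ht w)).Nonempty} := by
          rintro (w | j) hzp hzq hprod hicc
          · refine ⟨w, rfl, fun h => hzp (congrArg _ h), fun h => hzq (congrArg _ h), ?_⟩
            rw [vbar_inter_nonempty]
            constructor
            · rw [mem_Ioo_minmax]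
              rw [hXinl, hXinl, hXinl] at hprod
              exact rnk_betw R p q w hprod
            · rw [hSll, hHinl, Set.mem_Icc] at hicc
              rw [Set.mem_Icc]
              exact ⟨hsx.1, by linarith [hicc.2]⟩
          · exfalso
            rw [hSll, hHinr, Set.mem_Icc] at hicc
            linarith [hicc.2, hsx.1]
        obtain ⟨w1, rfl, hw1⟩ := key z1 hz1x hz1y hio1 hicc1
        obtain ⟨w2, rfl, hw2⟩ := key z2 hz2x hz2y hio2 hicc2
        exact congrArg Sum.inl (R.sight_one_bar p q hpq hw1 hw2)
      · -- chain edge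
        have hio1' : (X z1 - X (chainL u t i)) * (X z1 - X (chainR v t i)) < 0 ∧
            (X z2 - X (chainL u t i)) * (X z2 - X (chainR v t i)) < 0 := by
          rcases hc with ⟨rfl, rfl⟩ | ⟨rfl, rfl⟩
          · exact ⟨hio1, hio2⟩
          · rw [mul_comm] at hio1 hio2
            exact ⟨hio1, hio2⟩
        obtain ⟨hio1', hio2'⟩ := hio1'
        have finish : ∀ C : ℝ,
            (∀ z : V ⊕ Fin t, (X z - X (chainL u t i)) * (X z - X (chainR v t i)) < 0 →
              s * (X z - (a : ℝ)) = C) → z1 = z2 := by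
          intro C hval
          have e1 := hval z1 hio1'
          have e2 := hval z2 hio2'
          have h := e1.trans e2.symm
          have h2 := sgn_cancel a b h
          exact hXinj (by linarith)
        -- algebraic key identity
        have hkey : ∀ (P Q : ℝ) (z : V ⊕ Fin t),
            (X z - ((a : ℝ) + s * P)) * (X z - ((a : ℝ) + s * Q)) =
            (s * (X z - (a : ℝ)) - P) * (s * (X z - (a : ℝ)) - Q) := by
          intro P Q z
          linear_combination (P * Q - (X z - (a : ℝ))^2) * hs2
        -- the shape of each vertex in the s-normalized coordinate
        have hz_form : ∀ z : V ⊕ Fin t,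
            (∃ c : ℤ, ((c : ℤ) : ℝ) = s * (X z - (a : ℝ))) ∨
            (∃ j : Fin t, z = Sum.inr j ∧ s * (X z - (a : ℝ)) = offf m t ((j : ℕ) + 1)) := by
          rintro (w | j)
          · left
            rw [hXinl]
            exact sgn_int a b (rnk R w)
          · right
            refine ⟨j, rfl, ?_⟩
            rw [hXinr]
            linear_combination (offf m t ((j : ℕ) + 1)) * hs2
        by_cases h0 : (i : ℕ) = 0
        · -- first edge u -- w₁ : blocker set is empty
          apply finish 0
          intro z hprod
          exfalso
          have hXL : X (chainL u t i) = (a : ℝ) + s * 0 := by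
            unfold chainL
            rw [dif_pos h0, hXinl]
            ring
          have hXR : X (chainR v t i) = (a : ℝ) + s * offf m t 1 := by
            unfold chainR
            rw [dif_neg (show ¬ (i : ℕ) = t by omega)]
            rw [hXinr]
            norm_num [h0]
          rw [hXL, hXR, hkey] at hprod
          have hmin1 : ((min 1 m : ℕ) : ℝ) = 1 := by
            have : min 1 m = 1 := by omega
            rw [this]; norm_num
          have hofflb := offf_lb m t 1
          have hoffub := offf_ub m t (show (1 : ℕ) ≤ t + 1 by omega)
          have hpos : (0 : ℝ) < offf m t 1 := by rw [hmin1] at hofflb; linarith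
          obtain ⟨hg1, hg2⟩ := betw_lt hpos (by linarith [hprod] :
            (s * (X z - (a : ℝ)) - 0) * (s * (X z - (a : ℝ)) - offf m t 1) < 0)
          rcases hz_form z with ⟨c, hc⟩ | ⟨j, rfl, hj⟩
          · rw [← hc] at hg1 hg2
            have k1 : (0 : ℤ) < c := by exact_mod_cast (by linarith : (0:ℝ) < (c:ℝ))
            have k2 : c < 1 := by
              have : (c : ℝ) < 1 := by rw [hmin1] at hoffub; linarith
              exact_mod_cast this
            omega
          · rw [hj] at hg2
            have := offf_mono m t (show 1 ≤ (j : ℕ) + 1 by omega)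
            linarith
        · by_cases hT : (i : ℕ) = t
          · -- last edge w_t -- v : the unique possible blocker has rank m-1 offset
            apply finish ((m : ℝ) - 1)
            intro z hprod
            have hXL : X (chainL u t i) = (a : ℝ) + s * offf m t t := by
              unfold chainL
              rw [dif_neg h0, hXinr]
              have : (i : ℕ) - 1 + 1 = t := by omega
              rw [this]
            have hXR : X (chainR v t i) = (a : ℝ) + s * (m : ℝ) := by
              unfold chainR
              rw [dif_pos hT, hXinl]
              linear_combination s * hsba - ((b : ℝ) - (a : ℝ)) * hs2
            rw [hXL, hXR, hkey] at hprod
            have hoffub := offf_ub m t (show t ≤ t + 1 by omega)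
            have hofflb := offf_lb m t t
            have hminm : ((min t m : ℕ) : ℝ) ≤ (m : ℝ) := by
              exact_mod_cast (show min t m ≤ m by omega)
            have hminm2 : ((m : ℝ)) - 1 ≤ ((min t m : ℕ) : ℝ) := by
              have : m - 1 ≤ min t m := by omega
              have h' : ((m - 1 : ℕ) : ℝ) ≤ ((min t m : ℕ) : ℝ) := by exact_mod_cast this
              rw [Nat.cast_sub hm1] at h'
              exact_mod_cast h'
            have hlt : offf m t t < (m : ℝ) := by linarith
            obtain ⟨hg1, hg2⟩ := betw_lt hlt hprod
            rcases hz_form z with ⟨c, hc⟩ | ⟨j, rfl, hj⟩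
            · rw [← hc] at hg1 hg2
              have k1 : ((m : ℤ) : ℝ) - 2 < (c : ℝ) := by push_cast; linarith
              have k2 : (c : ℝ) < ((m : ℤ) : ℝ) := by push_cast; linarith
              have k1' : (m : ℤ) - 2 < c := by exact_mod_cast k1
              have k2' : c < (m : ℤ) := by exact_mod_cast k2
              have : c = (m : ℤ) - 1 := by omega
              rw [← hc, this]
              push_cast
              ring
            · exfalso
              rw [hj] at hg1
              have := offf_mono m t (show (j : ℕ) + 1 ≤ t by have := j.isLt; omega)
              linarith
          · -- middle edge w_i -- w_{i+1} : unique possible blocker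
            apply finish ((min (i : ℕ) m : ℕ) : ℝ)
            intro z hprod
            have hXL : X (chainL u t i) = (a : ℝ) + s * offf m t (i : ℕ) := by
              unfold chainL
              rw [dif_neg h0, hXinr]
              have : (i : ℕ) - 1 + 1 = (i : ℕ) := by omega
              rw [this]
            have hXR : X (chainR v t i) = (a : ℝ) + s * offf m t ((i : ℕ) + 1) := by
              unfold chainR
              rw [dif_neg hT, hXinr]
            rw [hXL, hXR, hkey] at hprod
            have hlt : offf m t (i : ℕ) < offf m t ((i : ℕ) + 1) :=
              offf_strict m t (by omega)
            obtain ⟨hg1, hg2⟩ := betw_lt hlt hprod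
            rcases hz_form z with ⟨c, hc⟩ | ⟨j, rfl, hj⟩
            · rw [← hc] at hg1 hg2
              have b1 := offf_lb m t (i : ℕ)
              have b2 := offf_ub m t (show (i : ℕ) + 1 ≤ t + 1 by have := i.isLt; omega)
              have b3 : ((min ((i : ℕ) + 1) m : ℕ) : ℝ) ≤ ((min (i : ℕ) m : ℕ) : ℝ) + 1 := by
                exact_mod_cast (show min ((i : ℕ) + 1) m ≤ min (i : ℕ) m + 1 by omega)
              have k1 : ((min (i : ℕ) m : ℕ) : ℤ) - 1 < c := by
                exact_mod_cast (show ((min (i : ℕ) m : ℕ) : ℝ) - 1 < (c : ℝ) by linarith)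
              have k2 : c < ((min (i : ℕ) m : ℕ) : ℤ) + 1 := by
                exact_mod_cast (show (c : ℝ) < ((min (i : ℕ) m : ℕ) : ℝ) + 1 by linarith)
              have hceq : c = ((min (i : ℕ) m : ℕ) : ℤ) := by omega
              rw [← hc, hceq]
              push_cast
              ring
            · exfalso
              rw [hj] at hg1 hg2
              have c1 : ¬ ((j : ℕ) + 1 ≤ (i : ℕ)) :=
                fun hle => absurd hg1 (not_lt.mpr (offf_mono m t hle))
              have c2 : ¬ ((i : ℕ) + 1 ≤ (j : ℕ) + 1) :=
                fun hle => absurd hg2 (not_lt.mpr (offf_mono m t hle))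
              omega
end

section
/- Let 𝒢 be an isomorphism-closed class of finite simple graphs that is closed under path-addition and contains a graph with at least two vertices. Then for every k ≥ 1, 𝒢 contains a graph H that contains a subdivision of the complete graph K_k as a subgraph, i.e., H has k distinct branch vertices and a family of paths in H, one joining each pair of branch vertices, such that the paths are pairwise internally vertex-disjoint and their internal vertices avoid all branch vertices. -/
/-- An isomorphism-closed class of finite simple graphs. -/
def IsoClosed (𝒢 : ∀ V : Type, Fintype V → SimpleGraph V → Prop) : Prop :=
  ∀ (V W : Type) [iV : Fintype V] [iW : Fintype W]
    (G : SimpleGraph V) (H : SimpleGraph W),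
    Nonempty (G ≃g H) → 𝒢 V iV G → 𝒢 W iW H

/-- A class of finite simple graphs is closed under path-addition if for every member
`G`, all distinct vertices `u, v` of `G`, and every internally vertex-disjoint path with
new internal vertices of length at least `|V(G)| - 1`, there is a supplementary edge set
`F` such that `G ⊕ P ⊕ F` belongs to the class. -/
def ClosedUnderPathAddition (𝒢 : ∀ V : Type, Fintype V → SimpleGraph V → Prop) : Prop :=
  ∀ (V : Type) [iV : Fintype V] (G : SimpleGraph V), 𝒢 V iV G →
    ∀ u v : V, u ≠ v → ∀ t : ℕ, Fintype.card V - 1 ≤ t + 1 →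
      ∃ F : Set (Sym2 (V ⊕ Fin t)), ValidSupp F ∧
        𝒢 (V ⊕ Fin t) inferInstance (pathAdd G u v t F)

/-- The internal vertices of a walk (its support without the two endpoints). -/
def SimpleGraph.Walk.internalSupport {W : Type*} {H : SimpleGraph W} {a b : W}
    (p : H.Walk a b) : List W :=
  p.support.tail.dropLast

/-- `H` contains a subdivision of the complete graph `K_k` as a subgraph: there are `k`
distinct branch vertices and a family of pairwise internally vertex-disjoint paths in
`H`, one joining each pair of branch vertices, whose internal vertices avoid all branch
vertices. -/
def ContainsSubdivisionOfCompleteGraph {W : Type*} (H : SimpleGraph W) (k : ℕ) : Prop :=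
  ∃ br : Fin k → W, Function.Injective br ∧
    ∃ P : ∀ i j : Fin k, i < j → H.Walk (br i) (br j),
      (∀ (i j : Fin k) (h : i < j), (P i j h).IsPath) ∧
      (∀ (i j : Fin k) (h : i < j),
        ∀ x ∈ (P i j h).internalSupport, ∀ l : Fin k, x ≠ br l) ∧
      (∀ (i j : Fin k) (h : i < j) (i' j' : Fin k) (h' : i' < j'), (i, j) ≠ (i', j') →
        ∀ x ∈ (P i j h).internalSupport, x ∉ (P i' j' h').internalSupport)

section Aux

open SimpleGraph

/-- A walk along a sequence of consecutively adjacent vertices. -/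
lemma exists_walk_ofFn {α : Type*} (H : SimpleGraph α) :
    ∀ (n : ℕ) (f : Fin (n + 1) → α),
      (∀ i : Fin n, H.Adj (f i.castSucc) (f i.succ)) →
      ∃ p : H.Walk (f 0) (f (Fin.last n)), p.support = List.ofFn f := by
  intro n
  induction n with
  | zero =>
    intro f _
    refine ⟨SimpleGraph.Walk.nil.copy rfl (by congr 1), by simp⟩
  | succ m ih =>
    intro f hadj
    obtain ⟨p, hp⟩ := ih (fun i => f i.succ)
      (fun i => by
        have := hadj i.succ
        rwa [← Fin.succ_castSucc] at this)
    have h0 : H.Adj (f 0) (f (Fin.succ 0)) := by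
      have := hadj 0
      rwa [Fin.castSucc_zero] at this
    refine ⟨(SimpleGraph.Walk.cons h0 p).copy rfl (by rw [Fin.succ_last]), ?_⟩
    rw [SimpleGraph.Walk.support_copy, SimpleGraph.Walk.support_cons, hp]
    simp [List.ofFn_succ]

lemma tail_dropLast_ofFn {α : Type*} {n : ℕ} (f : Fin (n + 2) → α) :
    (List.ofFn f).tail.dropLast = List.ofFn (fun i : Fin n => f i.succ.castSucc) := by
  apply List.ext_getElem
  · simp
  · intro i h1 h2
    have hlen : i < n := by simpa using h2
    rw [List.getElem_dropLast, List.getElem_tail, List.getElem_ofFn, List.getElem_ofFn]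
    rfl

lemma internalSupport_copy {α : Type*} {H : SimpleGraph α} {a b a' b' : α}
    (p : H.Walk a b) (ha : a = a') (hb : b = b') :
    (p.copy ha hb).internalSupport = p.internalSupport := by
  unfold SimpleGraph.Walk.internalSupport
  rw [SimpleGraph.Walk.support_copy]

lemma internalSupport_map {α β : Type*} {H : SimpleGraph α} {H' : SimpleGraph β}
    (f : H →g H') {a b : α} (p : H.Walk a b) :
    (p.map f).internalSupport = p.internalSupport.map f := by
  unfold SimpleGraph.Walk.internalSupport
  rw [SimpleGraph.Walk.support_map, ← List.map_tail, ← List.map_dropLast]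

lemma chainVertex_zero {α : Type*} (a b : α) {t : ℕ} (w : Fin t → α) :
    chainVertex a b w 0 = a := by
  simp [chainVertex]

lemma chainVertex_last {α : Type*} (a b : α) {t : ℕ} (w : Fin t → α) :
    chainVertex a b w (Fin.last (t + 1)) = b := by
  simp [chainVertex, Fin.last]

lemma chainVertex_injective {V : Type*} {u v : V} (huv : u ≠ v) (t : ℕ) :
    Function.Injective
      (chainVertex (Sum.inl u) (Sum.inl v) (fun i : Fin t => (Sum.inr i : V ⊕ Fin t))) := by
  intro i j h
  unfold chainVertex at h
  split_ifs at h with h1 h2 h3 h4 h5 h6 h7 h8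
  all_goals try exact Fin.ext (by omega)
  all_goals try exact absurd (Sum.inl.inj h) huv
  all_goals try exact absurd (Sum.inl.inj h) (Ne.symm huv)
  all_goals (simp at h; try exact Fin.ext (by omega))

lemma chainVertex_mid {V : Type*} (u v : V) (t : ℕ) (i : Fin t) :
    chainVertex (Sum.inl u) (Sum.inl v) (fun j : Fin t => (Sum.inr j : V ⊕ Fin t))
      i.succ.castSucc = Sum.inr ⟨i, i.isLt⟩ := by
  have h0 : ((i.succ.castSucc : Fin (t + 2)) : ℕ) = i + 1 := by simp
  unfold chainVertex
  rw [dif_neg (by omega), dif_neg (by have := i.isLt; omega)]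
  simp

/-- The key step: path-addition produces a supergraph (via `Sum.inl`) together with a
new path between the images of `u` and `v` whose internal vertices are fresh. -/
lemma key_step (𝒢 : ∀ V : Type, Fintype V → SimpleGraph V → Prop)
    (hpa : ClosedUnderPathAddition 𝒢)
    (W : Type) (iW : Fintype W) (H : SimpleGraph W) (hH : 𝒢 W iW H)
    (u v : W) (huv : u ≠ v) :
    ∃ (W' : Type) (iW' : Fintype W') (H' : SimpleGraph W') (ι : W → W'),
      𝒢 W' iW' H' ∧ Function.Injective ι ∧
      (∀ a b : W, H.Adj a b → H'.Adj (ι a) (ι b)) ∧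
      ∃ p : H'.Walk (ι u) (ι v), p.IsPath ∧
        ∀ x ∈ p.internalSupport, ∀ y : W, x ≠ ι y := by
  classical
  set t : ℕ := Fintype.card W with ht
  obtain ⟨F, -, hmem⟩ := hpa W H hH u v huv t (by omega)
  set H' : SimpleGraph (W ⊕ Fin t) := pathAdd H u v t F with hH'
  set f : Fin (t + 2) → W ⊕ Fin t :=
    chainVertex (Sum.inl u) (Sum.inl v) (fun i : Fin t => (Sum.inr i : W ⊕ Fin t)) with hf
  have hfinj : Function.Injective f := chainVertex_injective huv t
  have hadj : ∀ i : Fin (t + 1), H'.Adj (f i.castSucc) (f i.succ) := by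
    intro i
    rw [hH', pathAdd, SimpleGraph.fromEdgeSet_adj]
    constructor
    · left; right
      exact ⟨i, rfl⟩
    · intro hcon
      have : i.castSucc = i.succ := hfinj hcon
      have := congrArg (Fin.val) this
      simp at this
  obtain ⟨p, hp⟩ := exists_walk_ofFn H' (t + 1) f hadj
  refine ⟨W ⊕ Fin t, inferInstance, H', Sum.inl, hmem, Sum.inl_injective, ?_, ?_⟩
  · intro a b hab
    rw [hH', pathAdd, SimpleGraph.fromEdgeSet_adj]
    refine ⟨Or.inl (Or.inl ⟨s(a, b), hab, rfl⟩), ?_⟩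
    simp [hab.ne]
  · have h0 : f 0 = Sum.inl u := chainVertex_zero _ _ _
    have hl : f (Fin.last (t + 1)) = Sum.inl v := chainVertex_last _ _ _
    refine ⟨p.copy h0 hl, ?_, ?_⟩
    · rw [SimpleGraph.Walk.isPath_copy, SimpleGraph.Walk.isPath_def, hp]
      exact List.nodup_ofFn.mpr hfinj
    · intro x hx y
      rw [internalSupport_copy] at hx
      unfold SimpleGraph.Walk.internalSupport at hx
      rw [hp, tail_dropLast_ofFn] at hx
      rw [List.mem_ofFn] at hx
      obtain ⟨i, rfl⟩ := hx
      simp only [hf, chainVertex_mid] <;> simp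

/-- Main induction: for any list of pairs, the class contains a graph with `k`
distinguished vertices joined by internally disjoint paths along those pairs. -/
lemma build_subdivision (𝒢 : ∀ V : Type, Fintype V → SimpleGraph V → Prop)
    (hpa : ClosedUnderPathAddition 𝒢)
    (hne : ∃ (V : Type) (iV : Fintype V) (G : SimpleGraph V),
      𝒢 V iV G ∧ 2 ≤ @Fintype.card V iV) (k : ℕ) :
    ∀ L : List (Fin k × Fin k),
      ∃ (W : Type) (iW : Fintype W) (H : SimpleGraph W), 𝒢 W iW H ∧
        ∃ br : Fin k → W, Function.Injective br ∧
        ∃ P : ∀ i j : Fin k, i < j → (i, j) ∈ L → H.Walk (br i) (br j),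
          (∀ i j h hm, (P i j h hm).IsPath) ∧
          (∀ i j h hm, ∀ x ∈ (P i j h hm).internalSupport, ∀ l, x ≠ br l) ∧
          (∀ i j h hm i' j' h' hm', (i, j) ≠ (i', j') →
            ∀ x ∈ (P i j h hm).internalSupport,
              x ∉ (P i' j' h' hm').internalSupport) := by
  classical
  intro L
  induction L with
  | nil =>
    obtain ⟨V, iV, G, hG, hcard⟩ := hne
    obtain ⟨u, v, huv⟩ := @Fintype.exists_pair_of_one_lt_card V iV (by omega)
    obtain ⟨F, -, hmem⟩ := hpa V G hG u v huv (max (Fintype.card V) k)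
      (le_trans (Nat.sub_le _ _) (le_trans (le_max_left _ _) (Nat.le_succ _)))
    refine ⟨V ⊕ Fin (max (Fintype.card V) k), inferInstance, _, hmem,
      fun i => Sum.inr (Fin.castLE (le_max_right _ _) i),
      Sum.inr_injective.comp (Fin.castLE_injective _),
      fun i j h hm => absurd hm (by simp), ?_, ?_, ?_⟩ <;>
      (intro i j h hm; exact absurd hm (by simp))
  | cons hd tl ih =>
    obtain ⟨i₀, j₀⟩ := hd
    obtain ⟨W, iW, H, hH, br, hbr, P, hpath, havoid, hdisj⟩ := ih
    by_cases h0 : i₀ < j₀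
    · -- do a path-addition between `br i₀` and `br j₀`
      have huv : br i₀ ≠ br j₀ := fun e => Fin.ne_of_lt h0 (hbr e)
      obtain ⟨W', iW', H', ι, hH', hι, hadj, p, hppath, hfresh⟩ :=
        key_step 𝒢 hpa W iW H hH _ _ huv
      set ιh : H →g H' := ⟨ι, fun hab => hadj _ _ hab⟩ with hιh
      refine ⟨W', iW', H', hH', ι ∘ br, hι.comp hbr,
        fun i j h hm =>
          if he : (i, j) = (i₀, j₀) then
            p.copy
              (by rw [Prod.mk.injEq] at he
                  show ι (br i₀) = ι (br i); rw [he.1])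
              (by rw [Prod.mk.injEq] at he
                  show ι (br j₀) = ι (br j); rw [he.2])
          else
            (P i j h (by
              rcases List.mem_cons.mp hm with he2 | hl
              · exact absurd he2 he
              · exact hl)).map ιh,
        ?_, ?_, ?_⟩
      · intro i j h hm
        beta_reduce
        split
        · rw [SimpleGraph.Walk.isPath_copy]
          exact hppath
        · exact SimpleGraph.Walk.map_isPath_of_injective hι (hpath _ _ _ _)
      · intro i j h hm x hx l
        beta_reduce at hx
        split at hx
        · rw [internalSupport_copy] at hx
          exact hfresh x hx (br l)
        · rw [internalSupport_map] at hx
          obtain ⟨y, hy, rfl⟩ := List.mem_map.mp hx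
          intro e
          exact havoid _ _ _ _ y hy l (hι e)
      · intro i j h hm i' j' h' hm' hnep x hx
        beta_reduce at hx ⊢
        split at hx
        · rw [internalSupport_copy] at hx
          split
          · rename_i he he'
            exact absurd (he.trans he'.symm) hnep
          · rw [internalSupport_map]
            intro hx'
            obtain ⟨y, hy, rfl⟩ := List.mem_map.mp hx'
            exact hfresh _ hx y rfl
        · rw [internalSupport_map] at hx
          obtain ⟨y, hy, rfl⟩ := List.mem_map.mp hx
          split
          · rw [internalSupport_copy]
            intro hx'
            exact hfresh _ hx' y rfl
          · rw [internalSupport_map]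
            intro hx'
            obtain ⟨y', hy', he⟩ := List.mem_map.mp hx'
            have hyy : y' = y := hι he
            rw [hyy] at hy'
            exact hdisj _ _ _ _ _ _ _ _ hnep y hy hy'
    · -- nothing to add
      refine ⟨W, iW, H, hH, br, hbr,
        fun i j h hm => P i j h (by
          rcases List.mem_cons.mp hm with he | hl
          · cases he; exact absurd h h0
          · exact hl),
        fun i j h hm => hpath _ _ _ _,
        fun i j h hm => havoid _ _ _ _,
        fun i j h hm i' j' h' hm' hnep => hdisj _ _ _ _ _ _ _ _ hnep⟩

end Aux

/-- If an isomorphism-closed class of finite simple graphs is closed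
under path-addition and contains a graph with at least two vertices, then for every
`k ≥ 1` it contains a graph containing a subdivision of `K_k` as a subgraph. -/
theorem closedUnderPathAddition_contains_completeGraph_subdivision
    (𝒢 : ∀ V : Type, Fintype V → SimpleGraph V → Prop)
    (hiso : IsoClosed 𝒢) (hpa : ClosedUnderPathAddition 𝒢)
    (hne : ∃ (V : Type) (iV : Fintype V) (G : SimpleGraph V),
      𝒢 V iV G ∧ 2 ≤ @Fintype.card V iV)
    (k : ℕ) (hk : 1 ≤ k) :
    ∃ (W : Type) (iW : Fintype W) (H : SimpleGraph W),
      𝒢 W iW H ∧ ContainsSubdivisionOfCompleteGraph H k := by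
  classical
  obtain ⟨W, iW, H, hH, br, hbr, P, hpath, havoid, hdisj⟩ :=
    build_subdivision 𝒢 hpa hne k (Finset.univ : Finset (Fin k × Fin k)).toList
  exact ⟨W, iW, H, hH, br, hbr,
    fun i j h => P i j h (by simp [Finset.mem_toList]),
    fun i j h => hpath _ _ _ _,
    fun i j h => havoid _ _ _ _,
    fun i j h i' j' h' hnep => hdisj _ _ _ _ _ _ _ _ hnep⟩
end
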